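/- If m⁺(t)·n⁺(t) ≢ 0 on (T₁, T₂), i.e. there is a point where both m and n are positive, then C_k^{>++} and C_k^{<++} are nonempty for every k ≥ 2. Consequently the Fučík spectrum of -(p u')' + q u = a m u⁺ - b n u⁻ with Dirichlet conditions contains infinitely many hyperbolic-like curves in ℝ⁺ × ℝ⁺. -/

import Mathlib

open Set Filter Classical

noncomputable section

/-- `u c s` is the solution of `-(p·u')' + q·u = c·w·u` with `u c s s = 0` and
`(u c s)' s = 1/(p s)`; `u'` is its `t`-derivative. -/
def IsSolFamily (p q w : ℝ → ℝ) (u u' : ℝ → ℝ → ℝ → ℝ) : Prop :=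
  ∀ c s : ℝ, u c s s = 0 ∧ u' c s s = 1 / p s ∧
    ∀ t : ℝ, HasDerivAt (u c s) (u' c s t) t ∧
      HasDerivAt (fun τ => p τ * u' c s τ) (q t * u c s t - c * w t * u c s t) t

/-- Zero set of `u c s` strictly after `s`. -/
def zeroSet (u : ℝ → ℝ → ℝ → ℝ) (c s : ℝ) : Set ℝ := {t | s < t ∧ u c s t = 0}

/-- The zero-function `φ_c(s)`, valued in `EReal` (equal to `⊤` when `u c s`
never vanishes after `s`). -/
noncomputable def phiE (u : ℝ → ℝ → ℝ → ℝ) (c s : ℝ) : EReal :=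
  if (zeroSet u c s).Nonempty then ((sInf (zeroSet u c s) : ℝ) : EReal) else ⊤

/-- The zero-function as a map `EReal → EReal` (`⊤` propagates). -/
noncomputable def phiStep (u : ℝ → ℝ → ℝ → ℝ) (c : ℝ) (x : EReal) : EReal :=
  if x = ⊤ ∨ x = ⊥ then ⊤ else phiE u c x.toReal

/-- `Φ_k^>(a,b)`: composition of `k` alternating zero-functions `φ_a^m, φ_b^n`,
starting with `φ_a^m`. -/
noncomputable def PhiGt (uM uN : ℝ → ℝ → ℝ → ℝ) (a b : ℝ) : ℕ → EReal → EReal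
  | 0 => id
  | k + 1 => (if k % 2 = 0 then phiStep uM a else phiStep uN b) ∘ PhiGt uM uN a b k

/-- `Φ_k^<(a,b)`: composition of `k` alternating zero-functions, starting with
`φ_b^n`. -/
noncomputable def PhiLt (uM uN : ℝ → ℝ → ℝ → ℝ) (a b : ℝ) : ℕ → EReal → EReal
  | 0 => id
  | k + 1 => (if k % 2 = 0 then phiStep uN b else phiStep uM a) ∘ PhiLt uM uN a b k

/-- `C_k^{>++} = {(a,b) ∈ ℝ⁺×ℝ⁺ : Φ_k^>(a,b)(T₁) = T₂}`. -/
def CGt (uM uN : ℝ → ℝ → ℝ → ℝ) (T₁ T₂ : ℝ) (k : ℕ) : Set (ℝ × ℝ) :=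
  {ab | 0 < ab.1 ∧ 0 < ab.2 ∧ PhiGt uM uN ab.1 ab.2 k (T₁ : EReal) = (T₂ : EReal)}

/-- `C_k^{<++} = {(a,b) ∈ ℝ⁺×ℝ⁺ : Φ_k^<(a,b)(T₁) = T₂}`. -/
def CLt (uM uN : ℝ → ℝ → ℝ → ℝ) (T₁ T₂ : ℝ) (k : ℕ) : Set (ℝ × ℝ) :=
  {ab | 0 < ab.1 ∧ 0 < ab.2 ∧ PhiLt uM uN ab.1 ab.2 k (T₁ : EReal) = (T₂ : EReal)}

open Topology

set_option maxHeartbeats 1000000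

/-- Gronwall helper: if `f' ≤ C f + D` on `[α,β]` then `C f t + D ≤ (C f α + D) e^{C(t-α)}`. -/
lemma gron_le {f f' : ℝ → ℝ} {α β C D : ℝ} (hC : 0 ≤ C)
    (hd : ∀ t ∈ Icc α β, HasDerivAt f (f' t) t)
    (hle : ∀ t ∈ Icc α β, f' t ≤ C * f t + D) :
    ∀ t ∈ Icc α β, C * f t + D ≤ (C * f α + D) * Real.exp (C * (t - α)) := by
  intro t ht
  have hαβ : α ≤ β := le_trans ht.1 ht.2
  set g : ℝ → ℝ := fun t => (C * f t + D) * Real.exp (-C * t) with hg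
  have hgd : ∀ x ∈ Icc α β, HasDerivAt g
      ((C * f' x) * Real.exp (-C * x) + (C * f x + D) * (Real.exp (-C * x) * (-C))) x := by
    intro x hx
    have he : HasDerivAt (fun t => Real.exp (-C * t)) (Real.exp (-C * x) * (-C)) x := by
      simpa [Function.comp_def] using (Real.hasDerivAt_exp (-C * x)).comp x ((hasDerivAt_id x).const_mul (-C))
    exact (((hd x hx).const_mul C).add_const D).mul he
  have hanti : AntitoneOn g (Icc α β) := by
    apply antitoneOn_of_deriv_nonpos (convex_Icc α β)
    · exact fun x hx => ((hgd x hx).continuousAt).continuousWithinAt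
    · intro x hx
      exact ((hgd x (interior_subset hx)).differentiableAt).differentiableWithinAt
    · intro x hx
      rw [interior_Icc] at hx
      rw [(hgd x (Ioo_subset_Icc_self hx)).deriv]
      have h1 := hle x (Ioo_subset_Icc_self hx)
      have h2 : (0:ℝ) < Real.exp (-C * x) := Real.exp_pos _
      nlinarith [mul_le_mul_of_nonneg_left h1 hC, Real.exp_pos (-C * x)]
  have h := hanti (left_mem_Icc.2 hαβ) ht ht.1
  have h2 : (0:ℝ) < Real.exp (-C * t) := Real.exp_pos _
  have key : (C * f t + D) ≤ (C * f α + D) * Real.exp (-C * α) / Real.exp (-C * t) := by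
    rw [le_div_iff₀ h2]
    simpa [hg] using h
  calc C * f t + D ≤ (C * f α + D) * Real.exp (-C * α) / Real.exp (-C * t) := key
    _ = (C * f α + D) * Real.exp (C * (t - α)) := by
        rw [div_eq_iff (ne_of_gt h2), mul_assoc, ← Real.exp_add]
        ring_nf

/-- Backward Gronwall: if `-(C f + D) ≤ f'` on `[α,β]` then
`C f t + D ≤ (C f β + D) e^{C(β-t)}`. -/
lemma gron_ge {f f' : ℝ → ℝ} {α β C D : ℝ} (hC : 0 ≤ C)
    (hd : ∀ t ∈ Icc α β, HasDerivAt f (f' t) t)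
    (hle : ∀ t ∈ Icc α β, -(C * f t + D) ≤ f' t) :
    ∀ t ∈ Icc α β, C * f t + D ≤ (C * f β + D) * Real.exp (C * (β - t)) := by
  intro t ht
  have hαβ : α ≤ β := le_trans ht.1 ht.2
  set g : ℝ → ℝ := fun t => (C * f t + D) * Real.exp (C * t) with hg
  have hgd : ∀ x ∈ Icc α β, HasDerivAt g
      ((C * f' x) * Real.exp (C * x) + (C * f x + D) * (Real.exp (C * x) * C)) x := by
    intro x hx
    have he : HasDerivAt (fun t => Real.exp (C * t)) (Real.exp (C * x) * C) x := by
      simpa [Function.comp_def] using (Real.hasDerivAt_exp (C * x)).comp x ((hasDerivAt_id x).const_mul C)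
    exact (((hd x hx).const_mul C).add_const D).mul he
  have hmono : MonotoneOn g (Icc α β) := by
    apply monotoneOn_of_deriv_nonneg (convex_Icc α β)
    · exact fun x hx => ((hgd x hx).continuousAt).continuousWithinAt
    · intro x hx
      exact ((hgd x (interior_subset hx)).differentiableAt).differentiableWithinAt
    · intro x hx
      rw [interior_Icc] at hx
      rw [(hgd x (Ioo_subset_Icc_self hx)).deriv]
      have h1 := hle x (Ioo_subset_Icc_self hx)
      nlinarith [mul_le_mul_of_nonneg_left h1 hC, Real.exp_pos (C * x)]
  have h := hmono ht (right_mem_Icc.2 hαβ) ht.2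
  have h2 : (0:ℝ) < Real.exp (C * t) := Real.exp_pos _
  have key : (C * f t + D) ≤ (C * f β + D) * Real.exp (C * β) / Real.exp (C * t) := by
    rw [le_div_iff₀ h2]
    simpa [hg] using h
  calc C * f t + D ≤ (C * f β + D) * Real.exp (C * β) / Real.exp (C * t) := key
    _ = (C * f β + D) * Real.exp (C * (β - t)) := by
        rw [div_eq_iff (ne_of_gt h2), mul_assoc, ← Real.exp_add]
        ring_nf

/-- Master energy estimate for the first-order system `y' = Y/p`,
`Y' = (q - c w) y + g`. -/
lemma diff_bound {p q w y Y g : ℝ → ℝ} {c κ₁ κ₂ σ C Dg : ℝ}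
    (hC1 : 1 ≤ C) (hDg : 0 ≤ Dg) (hσ : σ ∈ Icc κ₁ κ₂)
    (hy : ∀ t, HasDerivAt y (Y t / p t) t)
    (hY : ∀ t, HasDerivAt Y ((q t - c * w t) * y t + g t) t)
    (hCp : ∀ t ∈ Icc κ₁ κ₂, 1 / p t ≤ C) (hppos : ∀ t, 0 < p t)
    (hCq : ∀ t ∈ Icc κ₁ κ₂, |q t - c * w t| ≤ C)
    (hg : ∀ t ∈ Icc κ₁ κ₂, |g t| ≤ Dg) :
    ∀ t ∈ Icc κ₁ κ₂, y t ^ 2 + Y t ^ 2 ≤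
      (y σ ^ 2 + Y σ ^ 2 + Dg ^ 2) * Real.exp ((2 * C + 1) * (κ₂ - κ₁)) := by
  set F : ℝ → ℝ := fun t => y t ^ 2 + Y t ^ 2 with hF
  set F' : ℝ → ℝ := fun t => 2 * y t * (Y t / p t) + 2 * Y t * ((q t - c * w t) * y t + g t)
    with hF'
  have hFd : ∀ t, HasDerivAt F (F' t) t := by
    intro t
    have h1 := ((hy t).pow 2).add ((hY t).pow 2)
    refine HasDerivAt.congr_deriv h1 ?_
    simp only [hF', Nat.cast_ofNat, pow_one]
    push_cast
    ring
  set C' : ℝ := 2 * C + 1 with hC'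
  have hC'pos : (0:ℝ) < C' := by positivity
  have hbound : ∀ t ∈ Icc κ₁ κ₂, |F' t| ≤ C' * F t + Dg ^ 2 := by
    intro t ht
    have hp := hppos t
    have hCpos : (0:ℝ) ≤ C := le_trans zero_le_one hC1
    have hyY : 2 * |y t| * |Y t| ≤ y t ^ 2 + Y t ^ 2 := by
      nlinarith [sq_nonneg (|y t| - |Y t|), sq_abs (y t), sq_abs (Y t)]
    have h1 : |2 * y t * (Y t / p t)| ≤ C * (y t ^ 2 + Y t ^ 2) := by
      have e1 : |2 * y t * (Y t / p t)| = (2 * |y t| * |Y t|) * (1 / p t) := by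
        rw [abs_mul, abs_mul, abs_div, abs_of_pos hp, abs_two]; ring
      rw [e1]
      have h1p : (0:ℝ) ≤ 1 / p t := by positivity
      calc (2 * |y t| * |Y t|) * (1 / p t) ≤ (y t ^ 2 + Y t ^ 2) * C := by
            apply mul_le_mul hyY (hCp t ht) h1p (by positivity)
        _ = C * (y t ^ 2 + Y t ^ 2) := by ring
    have h2 : |2 * Y t * ((q t - c * w t) * y t)| ≤ C * (y t ^ 2 + Y t ^ 2) := by
      have e2 : |2 * Y t * ((q t - c * w t) * y t)| = (2 * |y t| * |Y t|) * |q t - c * w t| := by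
        rw [abs_mul, abs_mul, abs_mul, abs_two]; ring
      rw [e2]
      calc (2 * |y t| * |Y t|) * |q t - c * w t| ≤ (y t ^ 2 + Y t ^ 2) * C :=
            mul_le_mul hyY (hCq t ht) (abs_nonneg _) (by positivity)
        _ = C * (y t ^ 2 + Y t ^ 2) := by ring
    have h3 : |2 * Y t * g t| ≤ Y t ^ 2 + Dg ^ 2 := by
      have e3 : |2 * Y t * g t| = 2 * |Y t| * |g t| := by rw [abs_mul, abs_mul, abs_two]
      rw [e3]
      nlinarith [hg t ht, sq_nonneg (|Y t| - |g t|), sq_abs (Y t), sq_abs (g t),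
        abs_nonneg (Y t), abs_nonneg (g t)]
    have e : F' t = 2 * y t * (Y t / p t) +
        (2 * Y t * ((q t - c * w t) * y t) + 2 * Y t * g t) := by
      simp only [hF']; ring
    have htri : |F' t| ≤ |2 * y t * (Y t / p t)| +
        (|2 * Y t * ((q t - c * w t) * y t)| + |2 * Y t * g t|) := by
      rw [e]; exact (abs_add_le _ _).trans (by gcongr; exact abs_add_le _ _)
    have hfin : |F' t| ≤ (2 * C + 1) * (y t ^ 2 + Y t ^ 2) + Dg ^ 2 := by nlinarith
    exact hfin
  have habs : ∀ t ∈ Icc κ₁ κ₂, F' t ≤ C' * F t + Dg ^ 2 :=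
    fun t ht => (le_abs_self _).trans (hbound t ht)
  have habs' : ∀ t ∈ Icc κ₁ κ₂, -(C' * F t + Dg ^ 2) ≤ F' t := by
    intro t ht
    have h := hbound t ht
    have h2 := neg_abs_le (F' t)
    linarith
  intro t ht
  have hL : κ₁ ≤ κ₂ := le_trans hσ.1 hσ.2
  have key : C' * F t + Dg ^ 2 ≤ (C' * F σ + Dg ^ 2) * Real.exp (C' * (κ₂ - κ₁)) := by
    rcases le_total σ t with hst | hts
    · have h := gron_le (le_of_lt hC'pos) (fun x hx => hFd x)
        (fun x hx => habs x ⟨le_trans hσ.1 hx.1, hx.2⟩) t ⟨hst, ht.2⟩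
      refine h.trans ?_
      have hFσ : 0 ≤ F σ := by positivity
      have : Real.exp (C' * (t - σ)) ≤ Real.exp (C' * (κ₂ - κ₁)) := by
        apply Real.exp_le_exp.2
        apply mul_le_mul_of_nonneg_left _ (le_of_lt hC'pos)
        linarith [ht.2, hσ.1]
      apply mul_le_mul_of_nonneg_left this
      positivity
    · have h := gron_ge (le_of_lt hC'pos) (fun x hx => hFd x)
        (fun x hx => habs' x ⟨hx.1, le_trans hx.2 hσ.2⟩) t ⟨ht.1, hts⟩
      refine h.trans ?_
      have hFσ : 0 ≤ F σ := by positivity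
      have : Real.exp (C' * (σ - t)) ≤ Real.exp (C' * (κ₂ - κ₁)) := by
        apply Real.exp_le_exp.2
        apply mul_le_mul_of_nonneg_left _ (le_of_lt hC'pos)
        linarith [ht.1, hσ.2]
      apply mul_le_mul_of_nonneg_left this
      positivity
  have hFnn : 0 ≤ F t := by positivity
  have hFσ : 0 ≤ F σ := by positivity
  have hexp1 : 1 ≤ Real.exp (C' * (κ₂ - κ₁)) :=
    Real.one_le_exp (mul_nonneg hC'pos.le (by linarith))
  -- from C' F t + Dg² ≤ (C' F σ + Dg²) e ≤ C'(F σ + Dg²) e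
  have h2 : C' * F t ≤ C' * ((F σ + Dg ^ 2) * Real.exp (C' * (κ₂ - κ₁))) := by
    have : C' * F σ + Dg ^ 2 ≤ C' * (F σ + Dg ^ 2) := by nlinarith
    nlinarith [Real.exp_pos (C' * (κ₂ - κ₁)), sq_nonneg Dg]
  have := (mul_le_mul_iff_right₀ hC'pos).1 h2
  simpa [hF] using this
section SolBasic
variable {p q w : ℝ → ℝ} {u u' : ℝ → ℝ → ℝ → ℝ}

namespace IsSolFamily

lemma zeroAt (hu : IsSolFamily p q w u u') (c s : ℝ) : u c s s = 0 := (hu c s).1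

lemma init (hu : IsSolFamily p q w u u') (c s : ℝ) : u' c s s = 1 / p s := (hu c s).2.1

lemma d1 (hu : IsSolFamily p q w u u') (c s t : ℝ) : HasDerivAt (u c s) (u' c s t) t :=
  ((hu c s).2.2 t).1

lemma d2 (hu : IsSolFamily p q w u u') (c s t : ℝ) :
    HasDerivAt (fun τ => p τ * u' c s τ) ((q t - c * w t) * u c s t) t := by
  have h := ((hu c s).2.2 t).2
  convert h using 1
  ring

lemma contU (hu : IsSolFamily p q w u u') (c s : ℝ) : Continuous (u c s) :=
  continuous_iff_continuousAt.2 fun t => (hu.d1 c s t).continuousAt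

lemma contPU (hu : IsSolFamily p q w u u') (c s : ℝ) :
    Continuous (fun t => p t * u' c s t) :=
  continuous_iff_continuousAt.2 fun t => (hu.d2 c s t).continuousAt

lemma contU' (hu : IsSolFamily p q w u u') (hp : Continuous p) (hppos : ∀ t, 0 < p t)
    (c s : ℝ) : Continuous (u' c s) := by
  have he : u' c s = fun t => (p t * u' c s t) / p t := by
    funext t
    rw [mul_comm, mul_div_assoc, div_self (ne_of_gt (hppos t)), mul_one]
  rw [he]
  exact (hu.contPU c s).div hp fun t => ne_of_gt (hppos t)

/-- Energy bound with reference point `s'` (where `u = 0`, `p u' = 1`):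
`u² + (p u')² ≤ e^{(2C+1)(κ₂-κ₁)}` on the compact, provided `C` dominates. -/
lemma energy_bound (hu : IsSolFamily p q w u u') (hppos : ∀ t, 0 < p t)
    {c s κ₁ κ₂ C : ℝ} (hC1 : 1 ≤ C) (hs : s ∈ Icc κ₁ κ₂)
    (hCp : ∀ t ∈ Icc κ₁ κ₂, 1 / p t ≤ C)
    (hCq : ∀ t ∈ Icc κ₁ κ₂, |q t - c * w t| ≤ C) :
    ∀ t ∈ Icc κ₁ κ₂, u c s t ^ 2 + (p t * u' c s t) ^ 2 ≤
      (1 + 0 ^ 2) * Real.exp ((2 * C + 1) * (κ₂ - κ₁)) := by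
  have h := diff_bound (p := p) (q := q) (w := w) (y := u c s)
    (Y := fun t => p t * u' c s t) (g := fun _ => (0:ℝ)) (c := c) (σ := s)
    hC1 le_rfl hs
    (fun t => by
      have := hu.d1 c s t
      have hpt := hppos t
      convert this using 1
      field_simp)
    (fun t => by simpa using hu.d2 c s t)
    hCp hppos hCq (fun t _ => by simp)
  intro t ht
  have h2 := h t ht
  have e : u c s s ^ 2 + (p s * u' c s s) ^ 2 = 1 := by
    rw [hu.zeroAt c s, hu.init c s]
    have := hppos s
    field_simp
    norm_num
  rw [e] at h2
  exact h2

/-- Uniqueness: the solution cannot have a double zero to the right of `s`. -/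
lemma no_double_zero (hu : IsSolFamily p q w u u') (hp : Continuous p) (hq : Continuous q)
    (hw : Continuous w) (hppos : ∀ t, 0 < p t)
    {c s z : ℝ} (hsz : s ≤ z) (h0 : u c s z = 0) (h1 : u' c s z = 0) : False := by
  -- choose C dominating 1/p and |q - c w| on [s, z]
  obtain ⟨C, hC1, hCp, hCq⟩ : ∃ C : ℝ, 1 ≤ C ∧ (∀ t ∈ Icc s z, 1 / p t ≤ C) ∧
      (∀ t ∈ Icc s z, |q t - c * w t| ≤ C) := by
    have hcomp : IsCompact (Icc s z) := isCompact_Icc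
    have hc1 : ContinuousOn (fun t => 1 / p t) (Icc s z) :=
      (continuous_const.div hp fun t => ne_of_gt (hppos t)).continuousOn
    have hc2 : ContinuousOn (fun t => |q t - c * w t|) (Icc s z) :=
      ((hq.sub (continuous_const.mul hw)).abs).continuousOn
    obtain ⟨B1, hB1⟩ := hcomp.exists_bound_of_continuousOn hc1
    obtain ⟨B2, hB2⟩ := hcomp.exists_bound_of_continuousOn hc2
    refine ⟨max 1 (max B1 B2), le_max_left _ _, fun t ht => ?_, fun t ht => ?_⟩
    · exact le_trans (le_trans (le_abs_self _) (hB1 t ht)) (le_max_of_le_right (le_max_left _ _))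
    · exact le_trans (le_trans (le_abs_self _) (hB2 t ht)) (le_max_of_le_right (le_max_right _ _))
  -- energy with reference point z where it vanishes
  have h := diff_bound (p := p) (q := q) (w := w) (y := u c s)
    (Y := fun t => p t * u' c s t) (g := fun _ => (0:ℝ)) (c := c) (σ := z)
    (κ₁ := s) (κ₂ := z) hC1 le_rfl (right_mem_Icc.2 hsz)
    (fun t => by
      have := hu.d1 c s t
      have hpt := hppos t
      convert this using 1
      field_simp)
    (fun t => by simpa using hu.d2 c s t)
    hCp hppos hCq (fun t _ => by simp)
  have h2 := h s (left_mem_Icc.2 hsz)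
  simp only [h0, h1, mul_zero] at h2
  rw [hu.zeroAt c s, hu.init c s] at h2
  have hps := hppos s
  have e : p s * (1 / p s) = 1 := by field_simp
  rw [e] at h2
  norm_num at h2

lemma pos_right (hu : IsSolFamily p q w u u') (hppos : ∀ t, 0 < p t) (c s : ℝ) :
    ∃ δ > 0, ∀ t ∈ Ioc s (s + δ), 0 < u c s t := by
  have hd := hu.d1 c s s
  have hpos : 0 < u' c s s := by
    rw [hu.init c s]
    exact one_div_pos.2 (hppos s)
  have hslope := hasDerivAt_iff_tendsto_slope.1 hd
  have hev : ∀ᶠ t in 𝓝[≠] s, 0 < slope (u c s) s t :=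
    hslope.eventually (eventually_gt_nhds hpos)
  have hev2 : ∀ᶠ t in 𝓝[>] s, 0 < slope (u c s) s t :=
    hev.filter_mono (nhdsWithin_mono s fun x hx => (ne_of_gt hx : x ≠ s).symm ∘ Eq.symm)
  rw [eventually_iff_exists_mem] at hev2
  obtain ⟨v, hv, hvpos⟩ := hev2
  rw [mem_nhdsGT_iff_exists_Ioc_subset] at hv
  obtain ⟨b, hb, hbs⟩ := hv
  refine ⟨b - s, by simpa using hb, fun t ht => ?_⟩
  have ht' : t ∈ Ioc s b := by
    constructor
    · exact ht.1
    · linarith [ht.2]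
  have hsl := hvpos t (hbs ht')
  rw [slope_def_field] at hsl
  have : 0 < t - s := by linarith [ht'.1]
  have := mul_pos hsl this
  rw [div_mul_cancel₀] at this
  · rw [hu.zeroAt c s] at this; linarith
  · exact ne_of_gt ‹0 < t - s›

lemma firstZero_spec (hu : IsSolFamily p q w u u') (hp : Continuous p) (hq : Continuous q)
    (hw : Continuous w) (hppos : ∀ t, 0 < p t) {c s : ℝ}
    (hne : (zeroSet u c s).Nonempty) :
    s < sInf (zeroSet u c s) ∧ u c s (sInf (zeroSet u c s)) = 0 ∧
      (∀ t ∈ Ioo s (sInf (zeroSet u c s)), 0 < u c s t) ∧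
      u' c s (sInf (zeroSet u c s)) < 0 := by
  obtain ⟨δ, hδ, hpos⟩ := hu.pos_right hppos c s
  have hsub : zeroSet u c s ⊆ {t | s + δ < t} := by
    intro t ht
    simp only [mem_setOf_eq]
    by_contra hle
    push_neg at hle
    exact absurd (ht.2) (ne_of_gt (hpos t ⟨ht.1, hle⟩))
  have hZ' : zeroSet u c s = {t | s + δ ≤ t ∧ u c s t = 0} := by
    ext t
    constructor
    · intro ht; exact ⟨le_of_lt (hsub ht), ht.2⟩
    · intro ht; exact ⟨by linarith [ht.1], ht.2⟩
  have hclosed : IsClosed {t | s + δ ≤ t ∧ u c s t = 0} := by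
    have h1 : IsClosed (Ici (s + δ)) := isClosed_Ici
    have h2 : IsClosed ((u c s) ⁻¹' {0}) := isClosed_singleton.preimage (hu.contU c s)
    have : {t | s + δ ≤ t ∧ u c s t = 0} = Ici (s + δ) ∩ (u c s) ⁻¹' {0} := rfl
    rw [this]; exact h1.inter h2
  have hbdd : BddBelow (zeroSet u c s) := ⟨s, fun t ht => le_of_lt ht.1⟩
  have hmem : sInf (zeroSet u c s) ∈ zeroSet u c s := by
    rw [hZ'] at hne hbdd ⊢
    exact hclosed.csInf_mem hne hbdd
  set z := sInf (zeroSet u c s) with hz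
  have hsz : s < z := hmem.1
  have huz : u c s z = 0 := hmem.2
  have hposIoo : ∀ t ∈ Ioo s z, 0 < u c s t := by
    intro t ht
    by_contra hle
    push_neg at hle
    rcases lt_or_eq_of_le hle with hlt | heq
    · -- u t < 0 : find a zero before t, contradiction with inf
      set ω := min (s + δ) ((s + t) / 2) with hω
      have hωs : s < ω := lt_min (by linarith) (by linarith [ht.1])
      have hωt : ω < t := lt_of_le_of_lt (min_le_right _ _) (by linarith [ht.1])
      have hωpos : 0 < u c s ω := hpos ω ⟨hωs, min_le_left _ _⟩
      have hcont : ContinuousOn (u c s) (Icc ω t) := (hu.contU c s).continuousOn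
      have hivt := intermediate_value_Icc' (le_of_lt hωt) hcont
      have h0m : (0:ℝ) ∈ Icc (u c s t) (u c s ω) := ⟨le_of_lt hlt, le_of_lt hωpos⟩
      obtain ⟨r, hr, hr0⟩ := hivt h0m
      have hrz : r ∈ zeroSet u c s := ⟨lt_of_lt_of_le hωs hr.1, hr0⟩
      have := csInf_le hbdd hrz
      have : z ≤ r := this
      linarith [hr.2, ht.2]
    · have hmem' : t ∈ zeroSet u c s := ⟨ht.1, heq⟩
      have hle' := csInf_le hbdd hmem'
      linarith [ht.2]
  refine ⟨hsz, huz, hposIoo, ?_⟩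
  have hne0 : u' c s z ≠ 0 := fun h0 => hu.no_double_zero hp hq hw hppos (le_of_lt hsz) huz h0
  rcases lt_or_gt_of_ne hne0 with h | h
  · exact h
  exfalso
  -- derivative at z is limit of slopes from the left, which are ≤ 0
  have hd := hu.d1 c s z
  have hslope := hasDerivAt_iff_tendsto_slope.1 hd
  have hmono : 𝓝[<] z ≤ 𝓝[≠] z :=
    nhdsWithin_mono z fun x hx => ne_of_lt hx
  have hslope' : Tendsto (slope (u c s) z) (𝓝[<] z) (𝓝 (u' c s z)) :=
    hslope.mono_left hmono
  have hub : ∀ᶠ t in 𝓝[<] z, slope (u c s) z t ≤ 0 := by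
    have hIoo : Ioo s z ∈ 𝓝[<] z := Ioo_mem_nhdsLT_of_mem ⟨hsz, le_rfl⟩
    filter_upwards [hIoo] with t ht
    rw [slope_def_field]
    have h1 : 0 < u c s t := hposIoo t ht
    have h2 : t - z < 0 := by linarith [ht.2]
    rw [huz]
    apply le_of_lt
    apply div_neg_of_pos_of_neg <;> [skip; exact h2]
    · simpa using h1
  have := le_of_tendsto hslope' hub
  linarith

end IsSolFamily

/-- Sturm comparison: if `g ≥ ω²/p` on `[α,β]` whose `1/p`-length is `≥ π/ω`,
a solution of `(pU')' = -g U` cannot be positive on all of `[α,β]`. -/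
lemma sturm_box {p g : ℝ → ℝ} {U U' : ℝ → ℝ} {α β ω : ℝ}
    (hp : Continuous p) (hppos : ∀ t, 0 < p t) (hω : 0 < ω) (hαβ : α ≤ β)
    (hU : ∀ t, HasDerivAt U (U' t) t)
    (hU2 : ∀ t, HasDerivAt (fun τ => p τ * U' τ) (-(g t) * U t) t)
    (hg : ∀ t ∈ Icc α β, ω ^ 2 / p t ≤ g t)
    (hlen : Real.pi / ω ≤ ∫ τ in α..β, 1 / p τ)
    (hpos : ∀ t ∈ Icc α β, 0 < U t) : False := by
  have hcont1p : Continuous fun τ => 1 / p τ :=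
    continuous_const.div hp fun t => ne_of_gt (hppos t)
  set X : ℝ → ℝ := fun t => ∫ τ in α..t, 1 / p τ with hXdef
  have hX : ∀ t, HasDerivAt X (1 / p t) t := by
    intro t
    exact intervalIntegral.integral_hasDerivAt_right
      (hcont1p.intervalIntegrable _ _)
      (hcont1p.stronglyMeasurableAtFilter _ _)
      hcont1p.continuousAt
  have hXα : X α = 0 := intervalIntegral.integral_same
  have hXmono : StrictMono X := by
    apply strictMono_of_deriv_pos
    intro t
    rw [(hX t).deriv]
    exact one_div_pos.2 (hppos t)
  have hXcont : Continuous X := continuous_iff_continuousAt.2 fun t => (hX t).continuousAt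
  -- find β' with X β' = π / ω
  have hπω : 0 ≤ Real.pi / ω := div_nonneg Real.pi_pos.le hω.le
  have hIVT := intermediate_value_Icc hαβ hXcont.continuousOn
  have hmem : Real.pi / ω ∈ Icc (X α) (X β) := by
    constructor
    · rw [hXα]; exact hπω
    · exact hlen
  obtain ⟨β', hβ'mem, hXβ'⟩ := hIVT hmem
  have hαβ' : α < β' := by
    rcases lt_or_eq_of_le hβ'mem.1 with h | h
    · exact h
    · exfalso
      rw [← h, hXα] at hXβ'
      have := Real.pi_pos
      have : Real.pi / ω > 0 := by positivity
      linarith [hXβ'.symm]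
  -- X maps [α, β'] into [0, π/ω]
  have hXrange : ∀ t ∈ Icc α β', 0 ≤ ω * X t ∧ ω * X t ≤ Real.pi := by
    intro t ht
    constructor
    · have : X α ≤ X t := hXmono.le_iff_le.2 ht.1
      rw [hXα] at this
      positivity
    · have : X t ≤ X β' := hXmono.le_iff_le.2 ht.2
      rw [hXβ'] at this
      calc ω * X t ≤ ω * (Real.pi / ω) := by nlinarith
        _ = Real.pi := by field_simp
  -- test function v = sin (ω X) and p·v' = ω cos (ω X)
  set v : ℝ → ℝ := fun t => Real.sin (ω * X t) with hvdef
  set pv : ℝ → ℝ := fun t => ω * Real.cos (ω * X t) with hpvdef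
  have hXω : ∀ t, HasDerivAt (fun t => ω * X t) (ω * (1 / p t)) t :=
    fun t => (hX t).const_mul ω
  have hv : ∀ t, HasDerivAt v (Real.cos (ω * X t) * (ω * (1 / p t))) t :=
    fun t => (hXω t).sin
  have hpv : ∀ t, HasDerivAt pv (ω * (-Real.sin (ω * X t) * (ω * (1 / p t)))) t :=
    fun t => ((hXω t).cos).const_mul ω
  -- Wronskian-type function
  set W : ℝ → ℝ := fun t => (p t * U' t) * v t - pv t * U t with hWdef
  have hW : ∀ t, HasDerivAt W ((ω ^ 2 / p t - g t) * (U t * v t)) t := by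
    intro t
    have h1 := (hU2 t).mul (hv t)
    have h2 := (hpv t).mul (hU t)
    have h3 := h1.sub h2
    refine HasDerivAt.congr_deriv h3 ?_
    have hpt := hppos t
    field_simp
    ring
  have hanti : AntitoneOn W (Icc α β') := by
    apply antitoneOn_of_deriv_nonpos (convex_Icc _ _)
    · exact fun x hx => (hW x).continuousAt.continuousWithinAt
    · exact fun x hx => ((hW x).differentiableAt).differentiableWithinAt
    · intro x hx
      rw [interior_Icc] at hx
      have hx' : x ∈ Icc α β' := Ioo_subset_Icc_self hx
      rw [(hW x).deriv]
      have hxβ : x ∈ Icc α β := ⟨hx'.1, le_trans hx'.2 hβ'mem.2⟩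
      have h1 : ω ^ 2 / p x - g x ≤ 0 := by linarith [hg x hxβ]
      have h2 : 0 < U x := hpos x hxβ
      have h3 : 0 ≤ v x := Real.sin_nonneg_of_nonneg_of_le_pi (hXrange x hx').1 (hXrange x hx').2
      have : 0 ≤ U x * v x := mul_nonneg h2.le h3
      exact mul_nonpos_of_nonpos_of_nonneg h1 this
  have hWα : W α = -(ω * U α) := by
    simp only [hWdef, hvdef, hpvdef, hXα, mul_zero, Real.sin_zero, Real.cos_zero, mul_one]
    ring
  have hWβ' : W β' = ω * U β' := by
    have hωX : ω * X β' = Real.pi := by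
      rw [hXβ']; field_simp
    simp only [hWdef, hvdef, hpvdef, hωX, Real.sin_pi, Real.cos_pi, mul_zero]
    ring
  have hUα : 0 < U α := hpos α ⟨le_refl α, hαβ⟩
  have hUβ' : 0 < U β' := hpos β' ⟨hβ'mem.1, hβ'mem.2⟩
  have := hanti (left_mem_Icc.2 hαβ'.le) (right_mem_Icc.2 hαβ'.le) hαβ'.le
  rw [hWα, hWβ'] at this
  nlinarith

lemma abs_bound_of_continuous {f : ℝ → ℝ} (hf : Continuous f) (a b : ℝ) :
    ∃ B, 0 ≤ B ∧ ∀ t ∈ Icc a b, |f t| ≤ B := by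
  obtain ⟨B, hB⟩ := isCompact_Icc.exists_bound_of_continuousOn (hf.continuousOn (s := Icc a b))
  exact ⟨max B 0, le_max_right _ _, fun t ht =>
    le_max_of_le_left (by simpa [Real.norm_eq_abs] using hB t ht)⟩

lemma pmin_on {p : ℝ → ℝ} (hp : Continuous p) (hppos : ∀ t, 0 < p t) {a b : ℝ}
    (hab : a ≤ b) : ∃ P, 0 < P ∧ ∀ t ∈ Icc a b, P ≤ p t := by
  obtain ⟨x, hx, hmin⟩ := isCompact_Icc.exists_isMinOn (nonempty_Icc.2 hab)
    (hp.continuousOn (s := Icc a b))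
  exact ⟨p x, hppos x, fun t ht => hmin ht⟩

lemma pmax_on {p : ℝ → ℝ} (hp : Continuous p) (hppos : ∀ t, 0 < p t) {a b : ℝ}
    (hab : a ≤ b) : ∃ P, 0 < P ∧ ∀ t ∈ Icc a b, p t ≤ P := by
  obtain ⟨B, hB0, hB⟩ := abs_bound_of_continuous hp a b
  refine ⟨max B 1, lt_of_lt_of_le zero_lt_one (le_max_right _ _), fun t ht =>
    le_max_of_le_left ((le_abs_self _).trans (hB t ht))⟩

namespace IsSolFamily
variable {p q w : ℝ → ℝ} {u u' : ℝ → ℝ → ℝ → ℝ}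

lemma pos_of_no_zero (hu : IsSolFamily p q w u u') (hppos : ∀ t, 0 < p t)
    {c s R : ℝ} (hsR : s < R) (hnz : ∀ r ∈ Ioc s R, u c s r ≠ 0) :
    ∀ r ∈ Ioc s R, 0 < u c s r := by
  obtain ⟨δ, hδ, hpos⟩ := hu.pos_right hppos c s
  intro t ht
  rcases lt_trichotomy (u c s t) 0 with hlt | heq | hgt
  · exfalso
    set ω := min (s + δ) ((s + t) / 2) with hω
    have hωs : s < ω := lt_min (by linarith) (by linarith [ht.1])
    have hωt : ω < t := lt_of_le_of_lt (min_le_right _ _) (by linarith [ht.1])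
    have hωpos : 0 < u c s ω := hpos ω ⟨hωs, min_le_left _ _⟩
    have hivt := intermediate_value_Icc' (le_of_lt hωt) ((hu.contU c s).continuousOn)
    obtain ⟨r, hr, hr0⟩ := hivt ⟨le_of_lt hlt, le_of_lt hωpos⟩
    exact hnz r ⟨lt_of_lt_of_le hωs hr.1, le_trans hr.2 ht.2⟩ hr0
  · exact absurd heq (hnz t ht)
  · exact hgt

/-- For `c` large, the solution starting anywhere at or before `α` has a zero
by `α + ε`, provided `[α, α+ε] ⊆ [t₁,t₂]` where `w ≥ μ > 0`. -/
lemma zero_forced (hu : IsSolFamily p q w u u') (hp : Continuous p) (hq : Continuous q)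
    (hw : Continuous w) (hppos : ∀ t, 0 < p t)
    {t₁ t₂ μ ε : ℝ} (hμ : 0 < μ)
    (hwμ : ∀ t ∈ Icc t₁ t₂, μ ≤ w t) (hε : 0 < ε) :
    ∃ A : ℝ, 1 ≤ A ∧ ∀ c, A ≤ c → ∀ s α : ℝ, s ≤ α → t₁ ≤ α → α + ε ≤ t₂ →
      (zeroSet u c s).Nonempty ∧ sInf (zeroSet u c s) ≤ α + ε := by
  rcases le_or_gt t₂ t₁ with h21 | h12
  · -- degenerate: no (s, α) can satisfy the constraints
    exact ⟨1, le_refl 1, fun c hc s α hsα h1α hα2 => absurd (by linarith) (not_lt.2 h21)⟩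
  obtain ⟨Pmax, hPmax0, hPmax⟩ := pmax_on hp hppos h12.le
  obtain ⟨Pmin, hPmin0, hPmin⟩ := pmin_on hp hppos h12.le
  obtain ⟨Q, hQ0, hQ⟩ := abs_bound_of_continuous hq t₁ t₂
  set ω : ℝ := 2 * Real.pi * Pmax / ε with hωdef
  have hωpos : 0 < ω := by
    have := Real.pi_pos
    positivity
  set A : ℝ := max 1 ((Q + ω ^ 2 / Pmin) / μ) with hA
  refine ⟨A, le_max_left _ _, fun c hc s α hsα h1α hα2 => ?_⟩
  have hcpos : 0 < c := lt_of_lt_of_le (lt_of_lt_of_le zero_lt_one (le_max_left _ _)) hc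
  have key : ∃ r ∈ Ioc s (α + ε), u c s r = 0 := by
    by_contra hno
    push_neg at hno
    have hpos := hu.pos_of_no_zero hppos (by linarith : s < α + ε) hno
    refine sturm_box (p := p) (g := fun t => c * w t - q t) (U := u c s) (U' := u' c s)
      (α := α + ε/2) (β := α + ε) (ω := ω) hp hppos hωpos (by linarith)
      (hu.d1 c s) (fun t => by
        have := hu.d2 c s t
        convert this using 1
        ring) ?_ ?_ ?_
    · -- coefficient bound
      intro t ht
      have ht12 : t ∈ Icc t₁ t₂ := ⟨by linarith [ht.1], by linarith [ht.2]⟩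
      have h1 : ω ^ 2 / p t ≤ ω ^ 2 / Pmin :=
        div_le_div_of_nonneg_left (sq_nonneg ω) hPmin0 (hPmin t ht12)
      have h2 : (Q + ω ^ 2 / Pmin) ≤ c * μ := by
        have hAc : (Q + ω ^ 2 / Pmin) / μ ≤ c := le_trans (le_max_right _ _) hc
        calc Q + ω ^ 2 / Pmin = ((Q + ω ^ 2 / Pmin) / μ) * μ := by field_simp
          _ ≤ c * μ := mul_le_mul_of_nonneg_right hAc hμ.le
      have h3 : c * μ ≤ c * w t := mul_le_mul_of_nonneg_left (hwμ t ht12) hcpos.le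
      have h4 : q t ≤ Q := (le_abs_self _).trans (hQ t ht12)
      linarith
    · -- length bound
      have hint : ∫ τ in (α + ε/2)..(α + ε), (1:ℝ) / Pmax ≤ ∫ τ in (α + ε/2)..(α + ε), 1 / p τ := by
        apply intervalIntegral.integral_mono_on (by linarith)
        · exact intervalIntegrable_const
        · exact (continuous_const.div hp fun t => ne_of_gt (hppos t)).intervalIntegrable _ _
        · intro t ht
          have ht12 : t ∈ Icc t₁ t₂ := ⟨by linarith [ht.1], by linarith [ht.2]⟩
          exact one_div_le_one_div_of_le (hppos t) (hPmax t ht12)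
      have hconst : ∫ τ in (α + ε/2)..(α + ε), (1:ℝ) / Pmax = (ε/2) * (1 / Pmax) := by
        rw [intervalIntegral.integral_const, smul_eq_mul]
        ring
      have heq : Real.pi / ω = (ε/2) * (1 / Pmax) := by
        rw [hωdef]
        have := Real.pi_pos
        field_simp
      rw [heq, ← hconst]
      exact hint
    · -- positivity
      intro t ht
      exact hpos t ⟨by linarith [ht.1], ht.2⟩
  obtain ⟨r, hr, hr0⟩ := key
  have hrz : r ∈ zeroSet u c s := ⟨hr.1, hr0⟩
  have hbdd : BddBelow (zeroSet u c s) := ⟨s, fun t ht => le_of_lt ht.1⟩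
  exact ⟨⟨r, hrz⟩, le_trans (csInf_le hbdd hrz) hr.2⟩

end IsSolFamily

namespace IsSolFamily
variable {p q w : ℝ → ℝ} {u u' : ℝ → ℝ → ℝ → ℝ}

/-- FTC representation: `p t u' t = 1 + ∫_{s}^{t} (q - c w) u`. -/
lemma pu'_eq (hu : IsSolFamily p q w u u') (hp : Continuous p) (hq : Continuous q)
    (hw : Continuous w) (hppos : ∀ t, 0 < p t) (c s t : ℝ) :
    p t * u' c s t = 1 + ∫ τ in s..t, (q τ - c * w τ) * u c s τ := by
  have hcont : Continuous fun τ => (q τ - c * w τ) * u c s τ :=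
    (hq.sub (continuous_const.mul hw)).mul (hu.contU c s)
  have h := intervalIntegral.integral_eq_sub_of_hasDerivAt
    (f := fun τ => p τ * u' c s τ) (f' := fun τ => (q τ - c * w τ) * u c s τ)
    (fun x _ => hu.d2 c s x) (hcont.intervalIntegrable s t)
  have hinit : p s * u' c s s = 1 := by
    rw [hu.init c s, mul_one_div, div_self (ne_of_gt (hppos s))]
  have h2 : (∫ τ in s..t, (q τ - c * w τ) * u c s τ) = p t * u' c s t - 1 := by
    simpa [hinit] using h
  linarith

/-- For `c > 0` small enough, `u c T₁` has no zero in `(T₁, T₂]`. -/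
lemma small_no_zero (hu : IsSolFamily p q w u u') (hp : Continuous p) (hq : Continuous q)
    (hw : Continuous w) (hppos : ∀ t, 0 < p t) (hqnn : ∀ t, 0 ≤ q t)
    {T₁ T₂ : ℝ} (hT : T₁ < T₂) :
    ∃ a₀, 0 < a₀ ∧ ∀ c, 0 < c → c ≤ a₀ → ∀ r ∈ Ioc T₁ T₂, u c T₁ r ≠ 0 := by
  obtain ⟨Pmin, hPmin0, hPmin⟩ := pmin_on hp hppos hT.le
  obtain ⟨Q, hQ0, hQ⟩ := abs_bound_of_continuous hq T₁ T₂
  obtain ⟨Wb, hWb0, hWb⟩ := abs_bound_of_continuous hw T₁ T₂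
  set C : ℝ := max 1 (max (1 / Pmin) (Q + Wb)) with hC
  have hC1 : (1:ℝ) ≤ C := le_max_left _ _
  set L : ℝ := T₂ - T₁ with hL
  have hL0 : 0 < L := by simp only [hL]; linarith
  set M : ℝ := Real.exp ((2 * C + 1) * L) with hM
  have hM1 : 1 ≤ M := Real.one_le_exp (by positivity)
  have hM0 : 0 < M := lt_of_lt_of_le zero_lt_one hM1
  set a₀ : ℝ := min 1 (1 / (Wb * M * L + 1)) with ha₀
  have hWML : (0:ℝ) < Wb * M * L + 1 := by positivity
  refine ⟨a₀, lt_min zero_lt_one (by positivity), fun c hc hca₀ r hr hr0 => ?_⟩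
  have hc1 : c ≤ 1 := le_trans hca₀ (min_le_left _ _)
  -- first zero z after T₁
  have hne : (zeroSet u c T₁).Nonempty := ⟨r, hr.1, hr0⟩
  obtain ⟨hz1, hz0, hzpos, _⟩ := hu.firstZero_spec hp hq hw hppos hne
  set z := sInf (zeroSet u c T₁) with hzdef
  have hbdd : BddBelow (zeroSet u c T₁) := ⟨T₁, fun t ht => le_of_lt ht.1⟩
  have hzT₂ : z ≤ T₂ := le_trans (csInf_le hbdd ⟨hr.1, hr0⟩) hr.2
  -- uniform bound |u| ≤ M on [T₁, T₂]
  have hbound := hu.energy_bound hppos (c := c) (s := T₁) (κ₁ := T₁) (κ₂ := T₂)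
    hC1 (left_mem_Icc.2 hT.le)
    (fun t ht => le_trans (one_div_le_one_div_of_le hPmin0 (hPmin t ht))
      (le_max_of_le_right (le_max_left _ _)))
    (fun t ht => by
      have h1 : |q t - c * w t| ≤ |q t| + c * |w t| := by
        rw [sub_eq_add_neg]
        refine (abs_add_le _ _).trans ?_
        rw [abs_neg, abs_mul, abs_of_pos hc]
      have h2 : c * |w t| ≤ Wb := by
        calc c * |w t| ≤ 1 * Wb := mul_le_mul hc1 (hWb t ht) (abs_nonneg _) zero_le_one
          _ = Wb := one_mul _
      have h3 : |q t| ≤ Q := hQ t ht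
      calc |q t - c * w t| ≤ Q + Wb := by linarith
        _ ≤ C := le_max_of_le_right (le_max_right _ _))
  have huM : ∀ t ∈ Icc T₁ T₂, |u c T₁ t| ≤ M := by
    intro t ht
    have h := hbound t ht
    have h2 : u c T₁ t ^ 2 ≤ M := by
      have hsq : (0:ℝ) ≤ (p t * u' c T₁ t) ^ 2 := sq_nonneg _
      calc u c T₁ t ^ 2 ≤ (1 + 0 ^ 2) * M := by nlinarith
        _ = M := by ring
    nlinarith [sq_abs (u c T₁ t), abs_nonneg (u c T₁ t)]
  -- nonnegativity of u on [T₁, z]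
  have hunn : ∀ τ ∈ Icc T₁ z, 0 ≤ u c T₁ τ := by
    intro τ hτ
    rcases eq_or_lt_of_le hτ.1 with h1 | h1
    · rw [← h1, hu.zeroAt]
    rcases eq_or_lt_of_le hτ.2 with h2 | h2
    · rw [h2, hz0]
    · exact (hzpos τ ⟨h1, h2⟩).le
  -- p u' stays positive on [T₁, z]
  have hpu' : ∀ t ∈ Icc T₁ z, 0 < p t * u' c T₁ t := by
    intro t ht
    rw [hu.pu'_eq hp hq hw hppos c T₁ t]
    have hIcc : Icc T₁ t ⊆ Icc T₁ T₂ := Icc_subset_Icc le_rfl (le_trans ht.2 hzT₂)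
    have hint : ∫ τ in T₁..t, (-(c * Wb * M)) ≤ ∫ τ in T₁..t, (q τ - c * w τ) * u c T₁ τ := by
      apply intervalIntegral.integral_mono_on ht.1 intervalIntegrable_const
      · exact (((hq.sub (continuous_const.mul hw)).mul (hu.contU c T₁)).intervalIntegrable _ _)
      · intro τ hτ
        have hτz : τ ∈ Icc T₁ z := Icc_subset_Icc le_rfl ht.2 hτ
        have hτ2 : τ ∈ Icc T₁ T₂ := hIcc hτ
        have hu0 : 0 ≤ u c T₁ τ := hunn τ hτz
        have hq0 : 0 ≤ q τ * u c T₁ τ := mul_nonneg (hqnn τ) hu0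
        have hcwu : c * w τ * u c T₁ τ ≤ c * Wb * M := by
          have : c * w τ * u c T₁ τ ≤ c * (|w τ| * |u c T₁ τ|) := by
            have habs : w τ * u c T₁ τ ≤ |w τ| * |u c T₁ τ| := by
              calc w τ * u c T₁ τ ≤ |w τ * u c T₁ τ| := le_abs_self _
                _ = |w τ| * |u c T₁ τ| := abs_mul _ _
            nlinarith
          refine this.trans ?_
          have h1 := hWb τ hτ2
          have h2 := huM τ hτ2
          have h3 : |w τ| * |u c T₁ τ| ≤ Wb * M :=
            mul_le_mul h1 h2 (abs_nonneg _) hWb0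
          calc c * (|w τ| * |u c T₁ τ|) ≤ c * (Wb * M) :=
                mul_le_mul_of_nonneg_left h3 hc.le
            _ = c * Wb * M := by ring
        have : (q τ - c * w τ) * u c T₁ τ = q τ * u c T₁ τ - c * w τ * u c T₁ τ := by ring
        rw [this]
        linarith
    have hconst : ∫ τ in T₁..t, (-(c * Wb * M)) = (t - T₁) * (-(c * Wb * M)) := by
      rw [intervalIntegral.integral_const, smul_eq_mul]
    have hlow : -(c * Wb * M) * L ≤ (t - T₁) * (-(c * Wb * M)) := by
      have hx : 0 ≤ c * Wb * M := by positivity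
      have h1 : t - T₁ ≤ L := by
        have := le_trans ht.2 hzT₂
        simp only [hL]; linarith
      nlinarith [ht.1]
    have hcsmall : c * Wb * M * L < 1 := by
      have h1 : c ≤ 1 / (Wb * M * L + 1) := le_trans hca₀ (min_le_right _ _)
      have h2 : c * (Wb * M * L + 1) ≤ 1 := by
        rw [div_eq_mul_inv, one_mul] at h1
        calc c * (Wb * M * L + 1) ≤ (Wb * M * L + 1)⁻¹ * (Wb * M * L + 1) :=
              mul_le_mul_of_nonneg_right h1 hWML.le
          _ = 1 := inv_mul_cancel₀ (ne_of_gt hWML)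
      nlinarith
    have : 1 + (-(c * Wb * M)) * L ≤ 1 + ∫ τ in T₁..t, (q τ - c * w τ) * u c T₁ τ := by
      rw [hconst] at hint
      linarith
    calc (0:ℝ) < 1 - c * Wb * M * L := by linarith
      _ = 1 + (-(c * Wb * M)) * L := by ring
      _ ≤ _ := this
  -- u is strictly increasing on [T₁, z], contradicting u(T₁) = u(z) = 0
  have hmono : StrictMonoOn (u c T₁) (Icc T₁ z) := by
    apply strictMonoOn_of_deriv_pos (convex_Icc _ _) (hu.contU c T₁).continuousOn
    intro x hx
    rw [interior_Icc] at hx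
    rw [(hu.d1 c T₁ x).deriv]
    have h := hpu' x (Ioo_subset_Icc_self hx)
    have hpx := hppos x
    nlinarith
  have := hmono (left_mem_Icc.2 hz1.le) (right_mem_Icc.2 hz1.le) hz1
  rw [hu.zeroAt, hz0] at this
  exact lt_irrefl 0 this

end IsSolFamily

namespace IsSolFamily
variable {p q w : ℝ → ℝ} {u u' : ℝ → ℝ → ℝ → ℝ}

/-- Continuous dependence of the solution (and of `p·u'`) on `(c, s)`,
uniformly on a compact interval around `s`. -/
lemma sol_cont (hu : IsSolFamily p q w u u') (hp : Continuous p) (hq : Continuous q)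
    (hw : Continuous w) (hppos : ∀ t, 0 < p t) {c s κ₁ κ₂ : ℝ}
    (h1 : κ₁ ≤ s - 1) (h2 : s + 1 ≤ κ₂) :
    ∀ ε, 0 < ε → ∃ δ, 0 < δ ∧ δ ≤ 1 ∧ ∀ c' s', |c' - c| ≤ δ → |s' - s| ≤ δ →
      ∀ t ∈ Icc κ₁ κ₂, |u c s t - u c' s' t| ≤ ε ∧
        |p t * u' c s t - p t * u' c' s' t| ≤ ε := by
  intro ε hε
  have hκ : κ₁ ≤ κ₂ := by linarith
  obtain ⟨Pmin, hPmin0, hPmin⟩ := pmin_on hp hppos hκ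
  obtain ⟨Q, hQ0, hQ⟩ := abs_bound_of_continuous hq κ₁ κ₂
  obtain ⟨WB, hWB0, hWB⟩ := abs_bound_of_continuous hw κ₁ κ₂
  set C : ℝ := max 1 (max (1 / Pmin) (Q + (|c| + 1) * WB)) with hC
  have hC1 : (1:ℝ) ≤ C := le_max_left _ _
  have hCp : ∀ t ∈ Icc κ₁ κ₂, 1 / p t ≤ C := fun t ht =>
    le_trans (one_div_le_one_div_of_le hPmin0 (hPmin t ht))
      (le_max_of_le_right (le_max_left _ _))
  have hCq : ∀ c', |c' - c| ≤ 1 → ∀ t ∈ Icc κ₁ κ₂, |q t - c' * w t| ≤ C := by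
    intro c' hc' t ht
    have hcc : |c'| ≤ |c| + 1 := by
      calc |c'| = |c + (c' - c)| := by ring_nf
        _ ≤ |c| + |c' - c| := abs_add_le _ _
        _ ≤ |c| + 1 := by linarith
    have h1' : |q t - c' * w t| ≤ |q t| + |c'| * |w t| := by
      rw [sub_eq_add_neg]
      refine (abs_add_le _ _).trans ?_
      rw [abs_neg, abs_mul]
    have h2' : |c'| * |w t| ≤ (|c| + 1) * WB :=
      mul_le_mul hcc (hWB t ht) (abs_nonneg _) (by positivity)
    calc |q t - c' * w t| ≤ Q + (|c| + 1) * WB := by linarith [hQ t ht]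
      _ ≤ C := le_max_of_le_right (le_max_right _ _)
  set L : ℝ := κ₂ - κ₁ with hL
  have hL0 : 0 < L := by simp only [hL]; linarith
  set M : ℝ := Real.exp ((2 * C + 1) * L) with hM
  have hM1 : 1 ≤ M := Real.one_le_exp (by positivity)
  have hM0 : 0 < M := lt_of_lt_of_le zero_lt_one hM1
  -- uniform bound for the perturbed solutions
  have huM : ∀ c' s', |c' - c| ≤ 1 → |s' - s| ≤ 1 → ∀ t ∈ Icc κ₁ κ₂, |u c' s' t| ≤ M := by
    intro c' s' hc' hs' t ht
    have hs'mem : s' ∈ Icc κ₁ κ₂ := by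
      rw [abs_le] at hs'
      constructor <;> [linarith [hs'.1]; linarith [hs'.2]]
    have hb := hu.energy_bound hppos (c := c') (s := s') hC1 hs'mem hCp (hCq c' hc')
    have h := hb t ht
    have h2 : u c' s' t ^ 2 ≤ M := by nlinarith [sq_nonneg (p t * u' c' s' t)]
    nlinarith [sq_abs (u c' s' t), abs_nonneg (u c' s' t)]
  -- initial gap function
  set G : ℝ → ℝ := fun s' => (u c s s') ^ 2 + (p s' * u' c s s' - 1) ^ 2 with hG
  have hGcont : Continuous G := by
    apply Continuous.add
    · exact (hu.contU c s).pow 2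
    · exact ((hu.contPU c s).sub continuous_const).pow 2
  have hGs : G s = 0 := by
    simp only [hG, hu.zeroAt c s, hu.init c s]
    have : p s * (1 / p s) = 1 := by
      rw [mul_one_div, div_self (ne_of_gt (hppos s))]
    rw [this]
    norm_num
  set E : ℝ := Real.exp ((2 * C + 1) * L) with hE
  have hE0 : 0 < E := Real.exp_pos _
  set η : ℝ := ε ^ 2 / (2 * E) with hη
  have hη0 : 0 < η := by positivity
  -- δ₁ : control of the initial gap
  have hcontAt : ContinuousAt G s := hGcont.continuousAt
  rw [Metric.continuousAt_iff] at hcontAt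
  obtain ⟨δ₁, hδ₁0, hδ₁⟩ := hcontAt η hη0
  set δ : ℝ := min (min 1 (δ₁ / 2)) (ε ^ 2 / (2 * E * (WB * M + 1) ^ 2)) with hδdef
  have hδ0 : 0 < δ := by
    apply lt_min (lt_min zero_lt_one (by positivity)) (by positivity)
  refine ⟨δ, hδ0, le_trans (min_le_left _ _) (min_le_left _ _), ?_⟩
  intro c' s' hc' hs' t ht
  have hδ1 : δ ≤ 1 := le_trans (min_le_left _ _) (min_le_left _ _)
  have hc'1 : |c' - c| ≤ 1 := le_trans hc' hδ1
  have hs'1 : |s' - s| ≤ 1 := le_trans hs' hδ1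
  have hs'mem : s' ∈ Icc κ₁ κ₂ := by
    rw [abs_le] at hs'1
    constructor <;> [linarith [hs'1.1]; linarith [hs'1.2]]
  -- apply the master estimate
  set Dg : ℝ := δ * (WB * M) with hDg
  have hDg0 : 0 ≤ Dg := by positivity
  have hkey := diff_bound (p := p) (q := q) (w := w)
    (y := fun t => u c s t - u c' s' t)
    (Y := fun t => p t * u' c s t - p t * u' c' s' t)
    (g := fun t => (c' - c) * (w t * u c' s' t)) (c := c) (σ := s')
    (κ₁ := κ₁) (κ₂ := κ₂) hC1 hDg0 hs'mem
    (fun r => by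
      have hd := (hu.d1 c s r).sub (hu.d1 c' s' r)
      have hpr := hppos r
      refine HasDerivAt.congr_deriv hd ?_
      field_simp)
    (fun r => by
      have hd := (hu.d2 c s r).sub (hu.d2 c' s' r)
      refine HasDerivAt.congr_deriv hd ?_
      ring)
    hCp hppos (hCq c (by simp))
    (fun r hr => by
      have h1 : |c' - c| ≤ δ := hc'
      have h2 : |w r * u c' s' r| ≤ WB * M := by
        rw [abs_mul]
        exact mul_le_mul (hWB r hr) (huM c' s' hc'1 hs'1 r hr) (abs_nonneg _) hWB0
      calc |(c' - c) * (w r * u c' s' r)| = |c' - c| * |w r * u c' s' r| := abs_mul _ _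
        _ ≤ δ * (WB * M) := mul_le_mul h1 h2 (abs_nonneg _) hδ0.le)
  -- initial gap is small
  have hgap : (u c s s' - u c' s' s') ^ 2 + (p s' * u' c s s' - p s' * u' c' s' s') ^ 2 ≤ η := by
    have e1 : u c' s' s' = 0 := hu.zeroAt c' s'
    have e2 : p s' * u' c' s' s' = 1 := by
      rw [hu.init c' s', mul_one_div, div_self (ne_of_gt (hppos s'))]
    rw [e1, e2, sub_zero]
    have hd : dist s' s < δ₁ := by
      rw [Real.dist_eq]
      calc |s' - s| ≤ δ := hs'
        _ ≤ δ₁ / 2 := le_trans (min_le_left _ _) (min_le_right _ _)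
        _ < δ₁ := by linarith
    have hlt := hδ₁ hd
    rw [Real.dist_eq, hGs, sub_zero] at hlt
    have hGnn : 0 ≤ G s' := by positivity
    rw [abs_of_nonneg hGnn] at hlt
    exact le_of_lt hlt
  -- Dg² is small
  have hDgsq : Dg ^ 2 ≤ ε ^ 2 / (2 * E) := by
    have hδle : δ ≤ ε ^ 2 / (2 * E * (WB * M + 1) ^ 2) := min_le_right _ _
    have h1 : Dg ^ 2 = δ ^ 2 * (WB * M) ^ 2 := by rw [hDg]; ring
    have h2 : δ ^ 2 ≤ δ := by nlinarith
    have h3 : (WB * M) ^ 2 ≤ (WB * M + 1) ^ 2 := by nlinarith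
    calc Dg ^ 2 = δ ^ 2 * (WB * M) ^ 2 := h1
      _ ≤ δ * (WB * M + 1) ^ 2 := by nlinarith [sq_nonneg (WB*M), hδ0.le]
      _ ≤ (ε ^ 2 / (2 * E * (WB * M + 1) ^ 2)) * (WB * M + 1) ^ 2 :=
          mul_le_mul_of_nonneg_right hδle (by positivity)
      _ = ε ^ 2 / (2 * E) := by field_simp
  have hfin := hkey t ht
  have hsum : (u c s t - u c' s' t) ^ 2 + (p t * u' c s t - p t * u' c' s' t) ^ 2 ≤ ε ^ 2 := by
    have hexp : Real.exp ((2 * C + 1) * (κ₂ - κ₁)) = E := by rw [hE, hL]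
    calc (u c s t - u c' s' t) ^ 2 + (p t * u' c s t - p t * u' c' s' t) ^ 2
        ≤ ((u c s s' - u c' s' s') ^ 2 + (p s' * u' c s s' - p s' * u' c' s' s') ^ 2 + Dg ^ 2) *
          Real.exp ((2 * C + 1) * (κ₂ - κ₁)) := hfin
      _ ≤ (η + ε ^ 2 / (2 * E)) * E := by
          rw [hexp]
          apply mul_le_mul_of_nonneg_right _ hE0.le
          linarith
      _ = ε ^ 2 := by rw [hη]; field_simp; ring
  constructor
  · nlinarith [sq_nonneg (p t * u' c s t - p t * u' c' s' t), sq_abs (u c s t - u c' s' t),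
      abs_nonneg (u c s t - u c' s' t), hε.le]
  · nlinarith [sq_nonneg (u c s t - u c' s' t), sq_abs (p t * u' c s t - p t * u' c' s' t),
      abs_nonneg (p t * u' c s t - p t * u' c' s' t), hε.le]

end IsSolFamily

lemma neg_right_of_deriv_neg {f : ℝ → ℝ} {z d : ℝ} (hd : HasDerivAt f d z)
    (hneg : d < 0) (hfz : f z = 0) : ∀ γ, 0 < γ → ∃ τ ∈ Ioc z (z + γ), f τ < 0 := by
  intro γ hγ
  have hslope := hasDerivAt_iff_tendsto_slope.1 hd
  have hev : ∀ᶠ t in 𝓝[≠] z, slope f z t < 0 :=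
    hslope.eventually (eventually_lt_nhds hneg)
  have hev2 : ∀ᶠ t in 𝓝[>] z, slope f z t < 0 :=
    hev.filter_mono (nhdsWithin_mono z fun x hx => (ne_of_gt hx : x ≠ z).symm ∘ Eq.symm)
  rw [eventually_iff_exists_mem] at hev2
  obtain ⟨v, hv, hvneg⟩ := hev2
  rw [mem_nhdsGT_iff_exists_Ioc_subset] at hv
  obtain ⟨b, hb, hbs⟩ := hv
  have hbz : z < b := hb
  set τ := min b (z + γ) with hτ
  have hτz : z < τ := lt_min hbz (by linarith)
  have hτb : τ ∈ Ioc z b := ⟨hτz, min_le_left _ _⟩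
  have hsl := hvneg τ (hbs hτb)
  rw [slope_def_field, hfz, sub_zero] at hsl
  refine ⟨τ, ⟨hτz, min_le_right _ _⟩, ?_⟩
  have h1 : 0 < τ - z := by linarith
  have := mul_neg_of_neg_of_pos hsl h1
  rw [div_mul_cancel₀ _ (ne_of_gt h1)] at this
  exact this

namespace IsSolFamily
variable {p q w : ℝ → ℝ} {u u' : ℝ → ℝ → ℝ → ℝ}

/-- Positivity of the solution on `(s, R]` persists under small perturbations of
`(c, s)`, together with uniform closeness on `[s-2, R+2]`. -/
lemma pos_persists (hu : IsSolFamily p q w u u') (hp : Continuous p) (hq : Continuous q)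
    (hw : Continuous w) (hppos : ∀ t, 0 < p t) {c s R : ℝ} (hsR : s < R)
    (hpos1 : ∀ r ∈ Ioc s R, 0 < u c s r) :
    ∀ ε₀, 0 < ε₀ → ∃ δ, 0 < δ ∧ ∀ c' s', |c' - c| ≤ δ → |s' - s| ≤ δ →
      (∀ r ∈ Ioc s' R, 0 < u c' s' r) ∧
      (∀ t ∈ Icc (s - 2) (R + 2), |u c s t - u c' s' t| ≤ ε₀) := by
  intro ε₀ hε₀
  set ρ : ℝ := 1 / (2 * p s) with hρ
  have hρ0 : 0 < ρ := by have := hppos s; positivity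
  -- window where u'₁ ≥ ρ
  have hcu' : ContinuousAt (u' c s) s := (hu.contU' hp hppos c s).continuousAt
  rw [Metric.continuousAt_iff] at hcu'
  obtain ⟨η₀, hη₀0, hη₀⟩ := hcu' ρ hρ0
  set η : ℝ := min (η₀ / 2) (min ((R - s) / 2) 1) with hηdef
  have hη0 : 0 < η := lt_min (by linarith) (lt_min (by linarith) zero_lt_one)
  have hη1 : η ≤ 1 := le_trans (min_le_right _ _) (min_le_right _ _)
  have hηR : η ≤ (R - s) / 2 := le_trans (min_le_right _ _) (min_le_left _ _)
  have hu'1 : ∀ x ∈ Icc (s - η) (s + η), ρ ≤ u' c s x := by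
    intro x hx
    have hd : dist x s < η₀ := by
      rw [Real.dist_eq]
      have h1 : |x - s| ≤ η := abs_le.2 ⟨by linarith [hx.1], by linarith [hx.2]⟩
      have h2 : η ≤ η₀ / 2 := min_le_left _ _
      linarith
    have := hη₀ hd
    rw [Real.dist_eq] at this
    rw [hu.init c s] at this
    have habs := abs_le.1 this.le
    have hps := hppos s
    have : 1 / p s - ρ ≤ u' c s x := by linarith [habs.1]
    have e : 1 / p s - ρ = ρ := by
      rw [hρ]
      field_simp
      ring
    linarith [e ▸ this]
  -- positive minimum on [s+η, R]
  have hsηR : s + η ≤ R := by linarith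
  obtain ⟨x₀, hx₀mem, hx₀min⟩ := isCompact_Icc.exists_isMinOn (nonempty_Icc.2 hsηR)
    ((hu.contU c s).continuousOn (s := Icc (s + η) R))
  set κ : ℝ := u c s x₀ with hκ
  have hκ0 : 0 < κ := hpos1 x₀ ⟨by linarith [hx₀mem.1], hx₀mem.2⟩
  have hκmin : ∀ x ∈ Icc (s + η) R, κ ≤ u c s x := fun x hx => hx₀min hx
  -- p lower bound on the big compact
  have hK : s - 2 ≤ R + 2 := by linarith
  obtain ⟨PminK, hPminK0, hPminK⟩ := pmin_on hp hppos hK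
  set ε₁ : ℝ := min ε₀ (min (κ / 2) (ρ * PminK / 2)) with hε₁def
  have hε₁0 : 0 < ε₁ := lt_min hε₀ (lt_min (by linarith) (by positivity))
  -- continuous dependence on the big compact
  obtain ⟨δ', hδ'0, hδ'1, hδ'⟩ := hu.sol_cont hp hq hw hppos
    (c := c) (s := s) (κ₁ := s - 2) (κ₂ := R + 2) (by linarith) (by linarith) ε₁ hε₁0
  set δ : ℝ := min δ' (η / 2) with hδdef
  have hδ0 : 0 < δ := lt_min hδ'0 (by linarith)
  refine ⟨δ, hδ0, fun c' s' hc' hs' => ?_⟩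
  have hclose := hδ' c' s' (le_trans hc' (min_le_left _ _)) (le_trans hs' (min_le_left _ _))
  have hs'η : |s' - s| ≤ η / 2 := le_trans hs' (min_le_right _ _)
  have hs'mem : s - η ≤ s' ∧ s' ≤ s + η / 2 := by
    rw [abs_le] at hs'η
    constructor <;> linarith [hs'η.1, hs'η.2]
  -- u'₂ ≥ ρ/2 on [s-η, s+η]
  have hu'2 : ∀ x ∈ Icc (s - η) (s + η), ρ / 2 ≤ u' c' s' x := by
    intro x hx
    have hxK : x ∈ Icc (s - 2) (R + 2) := ⟨by linarith [hx.1, hη1], by linarith [hx.2, hη1, hηR]⟩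
    have hpu := (hclose x hxK).2
    have hpx := hppos x
    have hPm := hPminK x hxK
    have habs := abs_le.1 hpu
    have h1 : p x * u' c' s' x ≥ p x * u' c s x - ε₁ := by linarith [habs.2]
    have h2 : ρ ≤ u' c s x := hu'1 x hx
    have hε₁ρ : ε₁ ≤ ρ * PminK / 2 := le_trans (min_le_right _ _) (min_le_right _ _)
    -- u'₂ x = (p x u'₂ x)/p x ≥ (p x ρ - ρ PminK/2)/p x ≥ ρ - ρ/2
    have h3 : p x * u' c' s' x ≥ p x * ρ - ρ * PminK / 2 := by nlinarith
    have h4 : p x * (ρ / 2) ≤ p x * u' c' s' x := by nlinarith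
    exact (mul_le_mul_iff_right₀ hpx).1 h4
  constructor
  · intro r hr
    rcases le_or_gt r (s + η) with hcase | hcase
    · -- monotonicity branch
      have hmono : StrictMonoOn (u c' s') (Icc (s - η) (s + η)) := by
        apply strictMonoOn_of_deriv_pos (convex_Icc _ _) (hu.contU c' s').continuousOn
        intro x hx
        rw [interior_Icc] at hx
        rw [(hu.d1 c' s' x).deriv]
        exact lt_of_lt_of_le (by linarith) (hu'2 x (Ioo_subset_Icc_self hx))
      have hs'm : s' ∈ Icc (s - η) (s + η) := ⟨hs'mem.1, by linarith [hs'mem.2]⟩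
      have hrm : r ∈ Icc (s - η) (s + η) := ⟨by linarith [hr.1, hs'mem.1], hcase⟩
      have := hmono hs'm hrm hr.1
      rw [hu.zeroAt c' s'] at this
      exact this
    · -- minimum branch
      have hrK : r ∈ Icc (s - 2) (R + 2) := ⟨by linarith [hr.1, hs'mem.1, hη1], by linarith [hr.2]⟩
      have hclr := (hclose r hrK).1
      have habs := abs_le.1 hclr
      have hκr : κ ≤ u c s r := hκmin r ⟨hcase.le, hr.2⟩
      have hε₁κ : ε₁ ≤ κ / 2 := le_trans (min_le_right _ _) (min_le_left _ _)
      linarith [habs.2]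
  · intro t ht
    exact le_trans (hclose t ht).1 (min_le_left _ _)

end IsSolFamily

namespace IsSolFamily
variable {p q w : ℝ → ℝ} {u u' : ℝ → ℝ → ℝ → ℝ}

/-- If there is no zero in `(s, R]`, the same holds (with positivity) nearby. -/
lemma no_zero_cont (hu : IsSolFamily p q w u u') (hp : Continuous p) (hq : Continuous q)
    (hw : Continuous w) (hppos : ∀ t, 0 < p t) {c s R : ℝ} (hsR : s < R)
    (hnz : ∀ r ∈ Ioc s R, u c s r ≠ 0) :
    ∃ δ, 0 < δ ∧ ∀ c' s', |c' - c| ≤ δ → |s' - s| ≤ δ →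
      ∀ r ∈ Ioc s' R, 0 < u c' s' r := by
  have hpos1 := hu.pos_of_no_zero hppos hsR hnz
  obtain ⟨δ, hδ0, hδ⟩ := hu.pos_persists hp hq hw hppos hsR hpos1 1 one_pos
  exact ⟨δ, hδ0, fun c' s' h1 h2 => (hδ c' s' h1 h2).1⟩

/-- Continuity of the first zero under perturbations of `(c, s)`. -/
lemma firstZero_cont (hu : IsSolFamily p q w u u') (hp : Continuous p) (hq : Continuous q)
    (hw : Continuous w) (hppos : ∀ t, 0 < p t) {c s : ℝ}
    (hne : (zeroSet u c s).Nonempty) :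
    ∀ ε, 0 < ε → ∃ δ, 0 < δ ∧ ∀ c' s', |c' - c| ≤ δ → |s' - s| ≤ δ →
      (zeroSet u c' s').Nonempty ∧
      |sInf (zeroSet u c' s') - sInf (zeroSet u c s)| ≤ ε := by
  intro ε hε
  obtain ⟨hz1, hz0, hzpos, hz'neg⟩ := hu.firstZero_spec hp hq hw hppos hne
  set z := sInf (zeroSet u c s) with hzdef
  set ε' : ℝ := min ε (min 1 ((z - s) / 2)) with hε'def
  have hε'0 : 0 < ε' := lt_min hε (lt_min one_pos (by linarith))
  have hε'ε : ε' ≤ ε := min_le_left _ _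
  have hε'1 : ε' ≤ 1 := le_trans (min_le_right _ _) (min_le_left _ _)
  have hε'zs : ε' ≤ (z - s) / 2 := le_trans (min_le_right _ _) (min_le_right _ _)
  obtain ⟨τ, hτmem, hτneg⟩ := neg_right_of_deriv_neg (hu.d1 c s z) hz'neg hz0 ε' hε'0
  obtain ⟨R, hRdef⟩ : ∃ R : ℝ, R = z - ε' / 2 := ⟨z - ε' / 2, rfl⟩
  have hsR : s < R := by simp only [hRdef]; linarith
  have hpos1 : ∀ r ∈ Ioc s R, 0 < u c s r := fun r hr =>
    hzpos r ⟨hr.1, by have := hr.2; simp only [hRdef] at this; linarith⟩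
  set ε₀ : ℝ := min 1 (-(u c s τ) / 2) with hε₀def
  have hε₀0 : 0 < ε₀ := lt_min one_pos (by linarith)
  obtain ⟨δ₁, hδ₁0, hδ₁⟩ := hu.pos_persists hp hq hw hppos hsR hpos1 ε₀ hε₀0
  set δ : ℝ := min δ₁ ((R - s) / 2) with hδdef
  have hδ0 : 0 < δ := lt_min hδ₁0 (by linarith)
  refine ⟨δ, hδ0, fun c' s' h1 h2 => ?_⟩
  obtain ⟨hpos2, hclose⟩ := hδ₁ c' s' (le_trans h1 (min_le_left _ _))
    (le_trans h2 (min_le_left _ _))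
  have hs'R : s' < R := by
    have := (abs_le.1 (le_trans h2 (min_le_right _ _))).2
    linarith
  have hτK : τ ∈ Icc (s - 2) (R + 2) := by
    constructor
    · linarith [hτmem.1]
    · have := hτmem.2
      simp only [hRdef]
      linarith
  have hu₂τ : u c' s' τ < 0 := by
    have habs := abs_le.1 (hclose τ hτK)
    have hε₀τ : ε₀ ≤ -(u c s τ) / 2 := min_le_right _ _
    linarith [habs.1]
  have hu₂R : 0 < u c' s' R := hpos2 R ⟨hs'R, le_rfl⟩
  have hRτ : R ≤ τ := by
    have := hτmem.1
    simp only [hRdef]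
    linarith
  obtain ⟨r, hr, hr0⟩ := intermediate_value_Icc' hRτ ((hu.contU c' s').continuousOn)
    ⟨hu₂τ.le, hu₂R.le⟩
  have hrz : r ∈ zeroSet u c' s' := ⟨lt_of_lt_of_le hs'R hr.1, hr0⟩
  have hbdd2 : BddBelow (zeroSet u c' s') := ⟨s', fun t ht => le_of_lt ht.1⟩
  refine ⟨⟨r, hrz⟩, ?_⟩
  have hub : sInf (zeroSet u c' s') ≤ z + ε' := by
    calc sInf (zeroSet u c' s') ≤ r := csInf_le hbdd2 hrz
      _ ≤ τ := hr.2
      _ ≤ z + ε' := hτmem.2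
  have hlb : R ≤ sInf (zeroSet u c' s') := by
    apply le_csInf ⟨r, hrz⟩
    intro x hx
    by_contra hlt
    push_neg at hlt
    exact absurd hx.2 (ne_of_gt (hpos2 x ⟨hx.1, hlt.le⟩))
  rw [abs_le]
  constructor
  · simp only [hRdef] at hlb; linarith
  · linarith
end IsSolFamily

section ERealLayer
variable {p q w : ℝ → ℝ} {u u' : ℝ → ℝ → ℝ → ℝ}

lemma phiE_gt_self (hu : IsSolFamily p q w u u') (hp : Continuous p) (hq : Continuous q)
    (hw : Continuous w) (hppos : ∀ t, 0 < p t) (c s : ℝ) :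
    (s : EReal) < phiE u c s := by
  rw [phiE]
  split_ifs with h
  · exact_mod_cast (hu.firstZero_spec hp hq hw hppos h).1
  · exact EReal.coe_lt_top s

lemma phiStep_ne_bot (u : ℝ → ℝ → ℝ → ℝ) (c : ℝ) (x : EReal) : phiStep u c x ≠ ⊥ := by
  rw [phiStep]
  split_ifs with h
  · simp
  · rw [phiE]
    split_ifs
    · exact EReal.coe_ne_bot _
    · simp

lemma phiStep_coe (u : ℝ → ℝ → ℝ → ℝ) (c : ℝ) (s : ℝ) :
    phiStep u c (s : EReal) = phiE u c s := by
  rw [phiStep]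
  simp [EReal.toReal_coe]

lemma phiStep_gt (hu : IsSolFamily p q w u u') (hp : Continuous p) (hq : Continuous q)
    (hw : Continuous w) (hppos : ∀ t, 0 < p t) (c : ℝ) {T : ℝ} {x : EReal}
    (hx : (T : EReal) < x) : (T : EReal) < phiStep u c x := by
  rw [phiStep]
  split_ifs with h
  · exact EReal.coe_lt_top T
  · push_neg at h
    have hxr : x = ((x.toReal : ℝ) : EReal) := (EReal.coe_toReal h.1 h.2).symm
    have hTx : (T : ℝ) < x.toReal := by
      rw [hxr] at hx
      exact_mod_cast hx
    calc (T : EReal) < (x.toReal : EReal) := by exact_mod_cast hTx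
      _ < phiE u c x.toReal := phiE_gt_self hu hp hq hw hppos c x.toReal

end ERealLayer

lemma phiStep_top (u : ℝ → ℝ → ℝ → ℝ) (c : ℝ) : phiStep u c ⊤ = ⊤ := by
  rw [phiStep]; simp

lemma phiStep_bot (u : ℝ → ℝ → ℝ → ℝ) (c : ℝ) : phiStep u c ⊥ = ⊤ := by
  rw [phiStep]; simp

lemma PhiGt_zero (uM uN : ℝ → ℝ → ℝ → ℝ) (a b : ℝ) (x : EReal) :
    PhiGt uM uN a b 0 x = x := rfl

lemma PhiGt_succ (uM uN : ℝ → ℝ → ℝ → ℝ) (a b : ℝ) (k : ℕ) (x : EReal) :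
    PhiGt uM uN a b (k + 1) x =
      (if k % 2 = 0 then phiStep uM a else phiStep uN b) (PhiGt uM uN a b k x) := rfl

section PhiLayer
variable {p q m n : ℝ → ℝ} {uM uM' uN uN' : ℝ → ℝ → ℝ → ℝ}

lemma PhiGt_top_persist (hM : IsSolFamily p q m uM uM') (hN : IsSolFamily p q n uN uN')
    (hp : Continuous p) (hq : Continuous q) (hm : Continuous m) (hn : Continuous n)
    (hppos : ∀ t, 0 < p t) (a b : ℝ) {T : ℝ} {x : EReal} :
    ∀ {j i : ℕ}, j ≤ i → (T : EReal) < PhiGt uM uN a b j x →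
      (T : EReal) < PhiGt uM uN a b i x := by
  intro j i hji h
  induction i, hji using Nat.le_induction with
  | base => exact h
  | succ i hji ih =>
    rw [PhiGt_succ]
    split_ifs
    · exact phiStep_gt hM hp hq hm hppos a ih
    · exact phiStep_gt hN hp hq hn hppos b ih

lemma PhiGt_cont (hM : IsSolFamily p q m uM uM') (hN : IsSolFamily p q n uN uN')
    (hp : Continuous p) (hq : Continuous q) (hm : Continuous m) (hn : Continuous n)
    (hppos : ∀ t, 0 < p t) (b T₁ : ℝ) {ahat : ℝ} :
    ∀ (k : ℕ) (x : ℝ), PhiGt uM uN ahat b k (T₁ : EReal) = (x : EReal) →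
    ∀ ε, 0 < ε → ∃ δ, 0 < δ ∧ ∀ a, |a - ahat| ≤ δ →
      ∃ x' : ℝ, PhiGt uM uN a b k (T₁ : EReal) = (x' : EReal) ∧ |x' - x| ≤ ε := by
  intro k
  induction k with
  | zero =>
    intro x hx ε hε
    refine ⟨1, one_pos, fun a _ => ⟨T₁, rfl, ?_⟩⟩
    rw [PhiGt_zero] at hx
    have he : T₁ = x := by exact_mod_cast hx
    simp [he, le_of_lt hε]
  | succ k ih =>
    intro x hx ε hε
    set v := PhiGt uM uN ahat b k (T₁ : EReal) with hv
    have hvne : v ≠ ⊤ ∧ v ≠ ⊥ := by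
      constructor <;> intro htop <;>
        rw [PhiGt_succ, ← hv, htop] at hx <;>
        split_ifs at hx <;>
        simp only [phiStep_top, phiStep_bot] at hx <;>
        exact (EReal.coe_ne_top x) hx.symm
    set y : ℝ := v.toReal with hy
    have hvy : v = (y : EReal) := (EReal.coe_toReal hvne.1 hvne.2).symm
    have hstage : PhiGt uM uN ahat b k (T₁ : EReal) = (y : EReal) := by rw [← hv]; exact hvy
    by_cases hk2 : k % 2 = 0
    · -- step uses uM with coefficient ahat (varies)
      have hx' : phiE uM ahat y = (x : EReal) := by
        rw [PhiGt_succ, ← hv, hvy, hk2] at hx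
        simpa [phiStep_coe] using hx
      have hne : (zeroSet uM ahat y).Nonempty := by
        by_contra hemp
        rw [phiE, if_neg hemp] at hx'
        exact (EReal.coe_ne_top x) hx'.symm
      have hsInf : sInf (zeroSet uM ahat y) = x := by
        rw [phiE, if_pos hne] at hx'
        exact_mod_cast hx'
      obtain ⟨δz, hδz0, hδz⟩ := hM.firstZero_cont hp hq hm hppos hne ε hε
      obtain ⟨δ', hδ'0, hδ'⟩ := ih y hstage δz hδz0
      refine ⟨min δ' δz, lt_min hδ'0 hδz0, fun a ha => ?_⟩
      obtain ⟨x'', hst, hcl⟩ := hδ' a (le_trans ha (min_le_left _ _))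
      have hzc := hδz a x'' (le_trans ha (min_le_right _ _)) hcl
      refine ⟨sInf (zeroSet uM a x''), ?_, ?_⟩
      · rw [PhiGt_succ, hst, hk2]
        simp only [if_pos]
        rw [phiStep_coe, phiE, if_pos hzc.1]
      · rw [← hsInf]
        exact hzc.2
    · -- step uses uN with fixed coefficient b
      have hx' : phiE uN b y = (x : EReal) := by
        rw [PhiGt_succ, ← hv, hvy, if_neg hk2] at hx
        simpa [phiStep_coe] using hx
      have hne : (zeroSet uN b y).Nonempty := by
        by_contra hemp
        rw [phiE, if_neg hemp] at hx'
        exact (EReal.coe_ne_top x) hx'.symm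
      have hsInf : sInf (zeroSet uN b y) = x := by
        rw [phiE, if_pos hne] at hx'
        exact_mod_cast hx'
      obtain ⟨δz, hδz0, hδz⟩ := hN.firstZero_cont hp hq hn hppos hne ε hε
      obtain ⟨δ', hδ'0, hδ'⟩ := ih y hstage δz hδz0
      refine ⟨min δ' δz, lt_min hδ'0 hδz0, fun a ha => ?_⟩
      obtain ⟨x'', hst, hcl⟩ := hδ' a (le_trans ha (min_le_left _ _))
      have hzc := hδz b x'' (by rw [sub_self, abs_zero]; exact hδz0.le) hcl
      refine ⟨sInf (zeroSet uN b x''), ?_, ?_⟩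
      · rw [PhiGt_succ, hst, if_neg hk2]
        rw [phiStep_coe, phiE, if_pos hzc.1]
      · rw [← hsInf]
        exact hzc.2
end PhiLayer

lemma PhiGt_ne_bot (uM uN : ℝ → ℝ → ℝ → ℝ) (a b : ℝ) :
    ∀ (k : ℕ) (x : EReal), x ≠ ⊥ → PhiGt uM uN a b k x ≠ ⊥
  | 0, x, hx => hx
  | k + 1, x, _ => by
    rw [PhiGt_succ]
    split_ifs <;> exact phiStep_ne_bot _ _ _

section PhiLayer2
variable {p q m n : ℝ → ℝ} {uM uM' uN uN' : ℝ → ℝ → ℝ → ℝ}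

lemma PhiGt_open_gt (hM : IsSolFamily p q m uM uM') (hN : IsSolFamily p q n uN uN')
    (hp : Continuous p) (hq : Continuous q) (hm : Continuous m) (hn : Continuous n)
    (hppos : ∀ t, 0 < p t) (b : ℝ) {T₁ T₂ : ℝ} (hT : T₁ < T₂) {ahat : ℝ} :
    ∀ k : ℕ, (T₂ : EReal) < PhiGt uM uN ahat b k (T₁ : EReal) →
    ∃ δ, 0 < δ ∧ ∀ a, |a - ahat| ≤ δ → (T₂ : EReal) < PhiGt uM uN a b k (T₁ : EReal) := by
  intro k
  induction k with
  | zero =>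
    intro h
    exfalso
    rw [PhiGt_zero] at h
    have : (T₂ : ℝ) < T₁ := by exact_mod_cast h
    linarith
  | succ k ih =>
    intro hgt
    set v := PhiGt uM uN ahat b k (T₁ : EReal) with hv
    by_cases hcase : (T₂ : EReal) < v
    · obtain ⟨δ, hδ0, hδ⟩ := ih hcase
      refine ⟨δ, hδ0, fun a ha => ?_⟩
      have h1 := hδ a ha
      rw [PhiGt_succ]
      split_ifs
      · exact phiStep_gt hM hp hq hm hppos a h1
      · exact phiStep_gt hN hp hq hn hppos b h1
    · push_neg at hcase
      have hvnetop : v ≠ ⊤ := by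
        intro h
        rw [h] at hcase
        exact absurd hcase (by simp)
      have hvnebot : v ≠ ⊥ := by
        rw [hv]
        exact PhiGt_ne_bot uM uN ahat b k _ (EReal.coe_ne_bot T₁)
      set y : ℝ := v.toReal with hy
      have hvy : v = (y : EReal) := (EReal.coe_toReal hvnetop hvnebot).symm
      have hyT₂ : y ≤ T₂ := by
        rw [hvy] at hcase
        exact_mod_cast hcase
      have hstage : PhiGt uM uN ahat b k (T₁ : EReal) = (y : EReal) := by rw [← hv]; exact hvy
      by_cases hk2 : k % 2 = 0
      · have hgt' : (T₂ : EReal) < phiE uM ahat y := by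
          rw [PhiGt_succ, ← hv, hvy, if_pos hk2, phiStep_coe] at hgt
          exact hgt
        by_cases hne : (zeroSet uM ahat y).Nonempty
        · have hz : T₂ < sInf (zeroSet uM ahat y) := by
            rw [phiE, if_pos hne] at hgt'
            exact_mod_cast hgt'
          obtain ⟨δz, hδz0, hδz⟩ := hM.firstZero_cont hp hq hm hppos hne
            ((sInf (zeroSet uM ahat y) - T₂) / 2) (by linarith)
          obtain ⟨δ', hδ'0, hδ'⟩ := PhiGt_cont hM hN hp hq hm hn hppos b T₁ k y hstage δz hδz0
          refine ⟨min δ' δz, lt_min hδ'0 hδz0, fun a ha => ?_⟩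
          obtain ⟨x'', hst, hcl⟩ := hδ' a (le_trans ha (min_le_left _ _))
          obtain ⟨hne', hclose⟩ := hδz a x'' (le_trans ha (min_le_right _ _)) hcl
          rw [PhiGt_succ, hst, if_pos hk2, phiStep_coe, phiE, if_pos hne']
          have habs := (abs_le.1 hclose).1
          have hfin : T₂ < sInf (zeroSet uM a x'') := by linarith
          exact_mod_cast hfin
        · have hnz : ∀ r ∈ Ioc y (T₂ + 1), uM ahat y r ≠ 0 := fun r hr h0 => hne ⟨r, hr.1, h0⟩
          obtain ⟨δz, hδz0, hδz⟩ := hM.no_zero_cont hp hq hm hppos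
            (show y < T₂ + 1 by linarith) hnz
          obtain ⟨δ', hδ'0, hδ'⟩ := PhiGt_cont hM hN hp hq hm hn hppos b T₁ k y hstage δz hδz0
          refine ⟨min δ' δz, lt_min hδ'0 hδz0, fun a ha => ?_⟩
          obtain ⟨x'', hst, hcl⟩ := hδ' a (le_trans ha (min_le_left _ _))
          have hposr := hδz a x'' (le_trans ha (min_le_right _ _)) hcl
          rw [PhiGt_succ, hst, if_pos hk2, phiStep_coe, phiE]
          split_ifs with hne'
          · have hlb : T₂ + 1 ≤ sInf (zeroSet uM a x'') := by
              apply le_csInf hne'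
              intro r hr
              by_contra hlt
              push_neg at hlt
              exact absurd hr.2 (ne_of_gt (hposr r ⟨hr.1, hlt.le⟩))
            have hfin : T₂ < sInf (zeroSet uM a x'') := by linarith
            exact_mod_cast hfin
          · exact EReal.coe_lt_top T₂
      · have hgt' : (T₂ : EReal) < phiE uN b y := by
          rw [PhiGt_succ, ← hv, hvy, if_neg hk2, phiStep_coe] at hgt
          exact hgt
        by_cases hne : (zeroSet uN b y).Nonempty
        · have hz : T₂ < sInf (zeroSet uN b y) := by
            rw [phiE, if_pos hne] at hgt'
            exact_mod_cast hgt'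
          obtain ⟨δz, hδz0, hδz⟩ := hN.firstZero_cont hp hq hn hppos hne
            ((sInf (zeroSet uN b y) - T₂) / 2) (by linarith)
          obtain ⟨δ', hδ'0, hδ'⟩ := PhiGt_cont hM hN hp hq hm hn hppos b T₁ k y hstage δz hδz0
          refine ⟨min δ' δz, lt_min hδ'0 hδz0, fun a ha => ?_⟩
          obtain ⟨x'', hst, hcl⟩ := hδ' a (le_trans ha (min_le_left _ _))
          obtain ⟨hne', hclose⟩ := hδz b x'' (by rw [sub_self, abs_zero]; exact hδz0.le) hcl
          rw [PhiGt_succ, hst, if_neg hk2, phiStep_coe, phiE, if_pos hne']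
          have habs := (abs_le.1 hclose).1
          have hfin : T₂ < sInf (zeroSet uN b x'') := by linarith
          exact_mod_cast hfin
        · have hnz : ∀ r ∈ Ioc y (T₂ + 1), uN b y r ≠ 0 := fun r hr h0 => hne ⟨r, hr.1, h0⟩
          obtain ⟨δz, hδz0, hδz⟩ := hN.no_zero_cont hp hq hn hppos
            (show y < T₂ + 1 by linarith) hnz
          obtain ⟨δ', hδ'0, hδ'⟩ := PhiGt_cont hM hN hp hq hm hn hppos b T₁ k y hstage δz hδz0
          refine ⟨min δ' δz, lt_min hδ'0 hδz0, fun a ha => ?_⟩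
          obtain ⟨x'', hst, hcl⟩ := hδ' a (le_trans ha (min_le_left _ _))
          have hposr := hδz b x'' (by rw [sub_self, abs_zero]; exact hδz0.le) hcl
          rw [PhiGt_succ, hst, if_neg hk2, phiStep_coe, phiE]
          split_ifs with hne'
          · have hlb : T₂ + 1 ≤ sInf (zeroSet uN b x'') := by
              apply le_csInf hne'
              intro r hr
              by_contra hlt
              push_neg at hlt
              exact absurd hr.2 (ne_of_gt (hposr r ⟨hr.1, hlt.le⟩))
            have hfin : T₂ < sInf (zeroSet uN b x'') := by linarith
            exact_mod_cast hfin
          · exact EReal.coe_lt_top T₂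
end PhiLayer2

lemma PhiLt_eq_PhiGt (uM uN : ℝ → ℝ → ℝ → ℝ) (a b : ℝ) :
    ∀ (k : ℕ) (x : EReal), PhiLt uM uN a b k x = PhiGt uN uM b a k x
  | 0, _ => rfl
  | k + 1, x => by
    show (if k % 2 = 0 then phiStep uN b else phiStep uM a) (PhiLt uM uN a b k x) =
      (if k % 2 = 0 then phiStep uN b else phiStep uM a) (PhiGt uN uM b a k x)
    rw [PhiLt_eq_PhiGt uM uN a b k x]

section Engine
variable {p q m n : ℝ → ℝ} {uM uM' uN uN' : ℝ → ℝ → ℝ → ℝ}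

lemma CGt_nonempty_main
    (hp : Continuous p) (hq : Continuous q) (hm : Continuous m) (hn : Continuous n)
    (hppos : ∀ t, 0 < p t) (hqnn : ∀ t, 0 ≤ q t)
    (hM : IsSolFamily p q m uM uM') (hN : IsSolFamily p q n uN uN')
    {T₁ T₂ : ℝ} (hT : T₁ < T₂)
    (hmn : ∃ t ∈ Ioo T₁ T₂, 0 < m t ∧ 0 < n t) :
    ∀ k : ℕ, 1 ≤ k → (CGt uM uN T₁ T₂ k).Nonempty := by
  obtain ⟨t₀, ht₀, hm0, hn0⟩ := hmn
  set μ : ℝ := min (m t₀) (n t₀) / 2 with hμdef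
  have hμ0 : 0 < μ := by
    have := lt_min hm0 hn0
    simp only [hμdef]
    linarith
  -- find a compact subinterval where m, n ≥ μ
  have hopenV : IsOpen ({t | μ < m t} ∩ ({t | μ < n t} ∩ Ioo T₁ T₂)) := by
    refine (isOpen_lt continuous_const hm).inter ((isOpen_lt continuous_const hn).inter isOpen_Ioo)
  have ht₀V : t₀ ∈ {t | μ < m t} ∩ ({t | μ < n t} ∩ Ioo T₁ T₂) := by
    refine ⟨?_, ?_, ht₀⟩
    · simp only [mem_setOf_eq, hμdef]
      have := min_le_left (m t₀) (n t₀)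
      linarith
    · simp only [mem_setOf_eq, hμdef]
      have := min_le_right (m t₀) (n t₀)
      linarith
  obtain ⟨r, hr0, hball⟩ := Metric.isOpen_iff.1 hopenV t₀ ht₀V
  obtain ⟨t₁, t₂', hsub, h12⟩ : ∃ t₁ t₂' : ℝ, Icc t₁ t₂' ⊆
      ({t | μ < m t} ∩ ({t | μ < n t} ∩ Ioo T₁ T₂)) ∧ t₁ < t₂' := by
    refine ⟨t₀ - r/4, t₀ + r/4, ?_, by linarith⟩
    intro x hx
    apply hball
    rw [Metric.mem_ball, Real.dist_eq, abs_lt]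
    constructor <;> [linarith [hx.1]; linarith [hx.2]]
  have hmμ : ∀ t ∈ Icc t₁ t₂', μ ≤ m t := fun t ht => (hsub ht).1.le
  have hnμ : ∀ t ∈ Icc t₁ t₂', μ ≤ n t := fun t ht => (hsub ht).2.1.le
  have ht₁T : T₁ < t₁ := (hsub (left_mem_Icc.2 h12.le)).2.2.1
  have ht₂T : t₂' < T₂ := (hsub (right_mem_Icc.2 h12.le)).2.2.2
  intro k hk
  have hk0 : (0:ℝ) < (k:ℝ) := by exact_mod_cast Nat.lt_of_lt_of_le Nat.zero_lt_one hk
  set ε : ℝ := (t₂' - t₁) / k with hεdef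
  have hε0 : 0 < ε := by
    simp only [hεdef]
    exact div_pos (by linarith) hk0
  obtain ⟨AM, hAM1, hAM⟩ := hM.zero_forced hp hq hm hppos hμ0 hmμ hε0
  obtain ⟨AN, hAN1, hAN⟩ := hN.zero_forced hp hq hn hppos hμ0 hnμ hε0
  set A : ℝ := max AM AN with hAdef
  have hA1 : (1:ℝ) ≤ A := le_trans hAM1 (le_max_left _ _)
  have hA0 : (0:ℝ) < A := lt_of_lt_of_le zero_lt_one hA1
  have hkne : (k:ℝ) ≠ 0 := ne_of_gt hk0
  have hkε : t₁ + (k:ℝ) * ε = t₂' := by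
    simp only [hεdef]
    field_simp
    ring
  -- large-side estimate
  have Hbig : ∀ a, A ≤ a → ∀ j, j ≤ k → ∃ x : ℝ,
      PhiGt uM uN a A j (T₁ : EReal) = (x : EReal) ∧ T₁ ≤ x ∧ x ≤ t₁ + (j:ℝ) * ε := by
    intro a ha j
    induction j with
    | zero =>
      intro _
      exact ⟨T₁, rfl, le_rfl, by simp; linarith⟩
    | succ j ihj =>
      intro hjk
      obtain ⟨x, hx, hxT, hxle⟩ := ihj (le_trans (Nat.le_succ j) hjk)
      have hjk1 : (j:ℝ) ≤ (k:ℝ) - 1 := by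
        have : (j:ℝ) + 1 ≤ (k:ℝ) := by exact_mod_cast hjk
        linarith
      have hxt2 : x ≤ t₂' - ε := by
        have h1 : t₁ + (j:ℝ) * ε ≤ t₁ + ((k:ℝ) - 1) * ε := by nlinarith
      -- t₁ + (k-1)ε = t₂' - ε
        have h2 : t₁ + ((k:ℝ) - 1) * ε = t₂' - ε := by
          rw [← hkε]; ring
        linarith
      set α : ℝ := max x t₁ with hαdef
      have hxα : x ≤ α := le_max_left _ _
      have ht₁α : t₁ ≤ α := le_max_right _ _
      have hεsmall : ε ≤ t₂' - t₁ := by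
        rw [hεdef]
        rw [div_le_iff₀ hk0]
        nlinarith
      have hαε : α + ε ≤ t₂' := by
        have h1 : x + ε ≤ t₂' := by linarith
        have h2 : t₁ + ε ≤ t₂' := by linarith
        rcases max_cases x t₁ with ⟨he, _⟩ | ⟨he, _⟩ <;> rw [hαdef, he] <;> linarith
      have hαub : α ≤ t₁ + (j:ℝ) * ε := by
        have h2 : t₁ ≤ t₁ + (j:ℝ) * ε := by
          have := mul_nonneg (Nat.cast_nonneg j) hε0.le
          linarith
        rcases max_cases x t₁ with ⟨he, _⟩ | ⟨he, _⟩ <;> rw [hαdef, he]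
        · exact hxle
        · exact h2
      by_cases hj2 : j % 2 = 0
      · have hzf := hAM a (le_trans (le_max_left _ _) ha) x α hxα ht₁α hαε
        have hspec := hM.firstZero_spec hp hq hm hppos hzf.1
        refine ⟨sInf (zeroSet uM a x), ?_, ?_, ?_⟩
        · rw [PhiGt_succ, hx, if_pos hj2, phiStep_coe, phiE, if_pos hzf.1]
        · exact le_trans hxT (le_of_lt hspec.1)
        · push_cast
          linarith [hzf.2]
      · have hzf := hAN A (le_max_right _ _) x α hxα ht₁α hαε
        have hspec := hN.firstZero_spec hp hq hn hppos hzf.1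
        refine ⟨sInf (zeroSet uN A x), ?_, ?_, ?_⟩
        · rw [PhiGt_succ, hx, if_neg hj2, phiStep_coe, phiE, if_pos hzf.1]
        · exact le_trans hxT (le_of_lt hspec.1)
        · push_cast
          linarith [hzf.2]
  -- small-side estimate
  obtain ⟨a₀, ha₀0, ha₀⟩ := hM.small_no_zero hp hq hm hppos hqnn hT
  have Hsmall : ∀ a, 0 < a → a ≤ a₀ → (T₂ : EReal) < PhiGt uM uN a A k (T₁ : EReal) := by
    intro a h1 h2
    have h1step : (T₂ : EReal) < PhiGt uM uN a A 1 (T₁ : EReal) := by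
      rw [PhiGt_succ]
      rw [if_pos (by norm_num : 0 % 2 = 0)]
      show (T₂ : EReal) < phiStep uM a ((T₁ : ℝ) : EReal)
      rw [phiStep_coe, phiE]
      split_ifs with hne
      · have spec := hM.firstZero_spec hp hq hm hppos hne
        have hznot : sInf (zeroSet uM a T₁) ∉ Ioc T₁ T₂ :=
          fun hmem => ha₀ a h1 h2 _ hmem spec.2.1
        have hz2 : T₂ < sInf (zeroSet uM a T₁) := by
          by_contra hle
          push_neg at hle
          exact hznot ⟨spec.1, hle⟩
        exact_mod_cast hz2
      · exact EReal.coe_lt_top T₂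
    exact PhiGt_top_persist hM hN hp hq hm hn hppos a A hk h1step
  -- a₀ < A
  have hbigA := Hbig A le_rfl k le_rfl
  obtain ⟨xk, hxk, hxkT, hxkle⟩ := hbigA
  have hxkT₂ : xk < T₂ := by
    rw [hkε] at hxkle
    linarith
  have ha₀A : a₀ < A := by
    by_contra hle
    push_neg at hle
    have h1 := Hsmall A hA0 hle
    rw [hxk] at h1
    have : T₂ < xk := by exact_mod_cast h1
    linarith
  -- intermediate value argument
  set S : Set ℝ := {a | a ∈ Icc a₀ A ∧ PhiGt uM uN a A k (T₁ : EReal) ≤ ((T₂:ℝ) : EReal)}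
    with hSdef
  have hSA : A ∈ S := by
    refine ⟨⟨ha₀A.le, le_rfl⟩, ?_⟩
    rw [hxk]
    exact_mod_cast hxkT₂.le
  have hSbdd : BddBelow S := ⟨a₀, fun x hx => hx.1.1⟩
  set astar : ℝ := sInf S with hastar
  have hstar1 : a₀ ≤ astar := le_csInf ⟨A, hSA⟩ fun x hx => hx.1.1
  have hstar2 : astar ≤ A := csInf_le hSbdd hSA
  have h0star : 0 < astar := lt_of_lt_of_le ha₀0 hstar1
  rcases lt_trichotomy (PhiGt uM uN astar A k (T₁ : EReal)) ((T₂:ℝ) : EReal) with hlt | heq | hgt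
  · exfalso
    -- the value is real
    have hnetop : PhiGt uM uN astar A k (T₁ : EReal) ≠ ⊤ := by
      intro h
      rw [h] at hlt
      exact absurd hlt (by simp)
    have hnebot : PhiGt uM uN astar A k (T₁ : EReal) ≠ ⊥ :=
      PhiGt_ne_bot uM uN astar A k _ (EReal.coe_ne_bot T₁)
    set y : ℝ := (PhiGt uM uN astar A k (T₁ : EReal)).toReal with hydef
    have hstage : PhiGt uM uN astar A k (T₁ : EReal) = (y : EReal) :=
      (EReal.coe_toReal hnetop hnebot).symm
    have hyT₂ : y < T₂ := by
      rw [hstage] at hlt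
      exact_mod_cast hlt
    have hstar_gt : a₀ < astar := by
      rcases lt_or_eq_of_le hstar1 with h | h
      · exact h
      · exfalso
        have := Hsmall astar (lt_of_lt_of_le ha₀0 hstar1) (le_of_eq h.symm)
        rw [hstage] at this
        have : T₂ < y := by exact_mod_cast this
        linarith
    obtain ⟨δ, hδ0, hδ⟩ := PhiGt_cont hM hN hp hq hm hn hppos A T₁ k y hstage
      ((T₂ - y) / 2) (by linarith)
    set aa : ℝ := astar - min δ ((astar - a₀) / 2) with haadef
    have hminpos : 0 < min δ ((astar - a₀) / 2) := lt_min hδ0 (by linarith)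
    have haalt : aa < astar := by simp only [haadef]; linarith
    have haage : a₀ ≤ aa := by
      have : min δ ((astar - a₀) / 2) ≤ (astar - a₀) / 2 := min_le_right _ _
      simp only [haadef]
      linarith
    have haaδ : |aa - astar| ≤ δ := by
      have h1 : min δ ((astar - a₀) / 2) ≤ δ := min_le_left _ _
      rw [abs_le]
      constructor <;> simp only [haadef] <;> linarith
    obtain ⟨x', hx', hclx⟩ := hδ aa haaδ
    have hx'T₂ : x' < T₂ := by
      have := (abs_le.1 hclx).2
      linarith
    have haaS : aa ∈ S := by
      refine ⟨⟨haage, by linarith⟩, ?_⟩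
      rw [hx']
      exact_mod_cast hx'T₂.le
    have := csInf_le hSbdd haaS
    rw [← hastar] at this
    linarith
  · exact ⟨(astar, A), h0star, hA0, heq⟩
  · exfalso
    obtain ⟨δ, hδ0, hδ⟩ := PhiGt_open_gt hM hN hp hq hm hn hppos A hT k hgt
    have hlt2 : sInf S < astar + δ := by rw [← hastar]; linarith
    obtain ⟨aa, haaS, haalt⟩ := exists_lt_of_csInf_lt ⟨A, hSA⟩ hlt2
    have haage : astar ≤ aa := by rw [hastar]; exact csInf_le hSbdd haaS
    have := hδ aa (abs_le.2 ⟨by linarith, by linarith⟩)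
    exact absurd haaS.2 (not_le.2 this)
end Engine

/-- If `m` and `n` are both positive at some point of `(T₁,T₂)`
(`m⁺·n⁺ ≢ 0`), then `C_k^{>++}` and `C_k^{<++}` are nonempty for every `k ≥ 2`:
the Fučík spectrum contains infinitely many hyperbolic-like curves in
`ℝ⁺ × ℝ⁺`. -/
theorem infinitely_many_curves
    (p q m n : ℝ → ℝ) (uM uM' uN uN' : ℝ → ℝ → ℝ → ℝ) (T₁ T₂ : ℝ)
    (hT : T₁ < T₂)
    (hp : Continuous p) (hq : Continuous q) (hm : Continuous m) (hn : Continuous n)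
    (hppos : ∀ t, 0 < p t) (hqnn : ∀ t, 0 ≤ q t)
    (hM : IsSolFamily p q m uM uM') (hN : IsSolFamily p q n uN uN')
    (hmn : ∃ t ∈ Ioo T₁ T₂, 0 < m t ∧ 0 < n t) :
    ∀ k : ℕ, 2 ≤ k →
      (CGt uM uN T₁ T₂ k).Nonempty ∧ (CLt uM uN T₁ T₂ k).Nonempty := by
  intro k hk
  have hk1 : 1 ≤ k := le_trans (by norm_num) hk
  constructor
  · exact CGt_nonempty_main hp hq hm hn hppos hqnn hM hN hT hmn k hk1
  · obtain ⟨t₀, ht₀, hm0, hn0⟩ := hmn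
    have h := CGt_nonempty_main hp hq hn hm hppos hqnn hN hM hT ⟨t₀, ht₀, hn0, hm0⟩ k hk1
    obtain ⟨⟨b', a'⟩, hmem⟩ := h
    obtain ⟨hb', ha', hphi⟩ := hmem
    refine ⟨(a', b'), ha', hb', ?_⟩
    show PhiLt uM uN a' b' k (T₁ : EReal) = (T₂ : EReal)
    rw [PhiLt_eq_PhiGt]
    exact hphi
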